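/- arXiv:2009.01639 — 4 statements merged into one kernel-verified Lean document; each statement's English description precedes it below -/
import Mathlib

section
/- Let n, m ∈ ℕ with m ≥ n and let f : I → ℝ^n be an m-times continuously differentiable function such that its Wronskian W_f is nonvanishing on I. Define a = (a_1, ..., a_n) : I → ℝ^n by a_j := Φ_f^{[n−j]} for j ∈ {1, ..., n}, and define X_a := (a | e_1 | ... | e_{n−1}). Then for every k = (k_1, ..., k_n) ∈ ℕ₀^n with k_i ≤ m for all i, setting ℓ_i := max(k_i − n + 1, 0), one has on I: W_f^k = W_f · det( B_{ℓ_1}(X_a, ..., X_a^{(ℓ_1−1)}) e_{n+ℓ_1−k_1} | ... | B_{ℓ_n}(X_a, ..., X_a^{(ℓ_n−1)}) e_{n+ℓ_n−k_n} ). -/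
open Matrix

/-- Noncommutative complete Bell polynomials: `B_0 = I_n`,
`B_{m+1}(X_1,…,X_{m+1}) = ∑_{j=0}^m C(m,j) B_j(X_1,…,X_j) X_{m+1-j}`.
Here `X : Fin m → _` with `X i` playing the role of `X_{i+1}`. -/
noncomputable def Bell {n : ℕ} :
    (m : ℕ) → (Fin m → Matrix (Fin n) (Fin n) ℝ) → Matrix (Fin n) (Fin n) ℝ
  | 0, _ => 1
  | m + 1, X => ∑ j : Fin (m + 1),
      (Nat.choose m (j : ℕ) : ℝ) •
        (Bell (j : ℕ) (fun i : Fin (j : ℕ) => X (Fin.castLE (by omega) i)) *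
          X ⟨m - (j : ℕ), by omega⟩)

/-- Entrywise `k`-th derivative (within `I`) of a matrix-valued function. -/
noncomputable def matD {n : ℕ} (I : Set ℝ) (X : ℝ → Matrix (Fin n) (Fin n) ℝ) (k : ℕ)
    (x : ℝ) : Matrix (Fin n) (Fin n) ℝ :=
  Matrix.of fun p q => iteratedDerivWithin k (fun t => X t p q) I x

/-- `B_j(X, X', …, X^{(j-1)})` evaluated at `x` (derivatives within `I`). -/
noncomputable def BellD {n : ℕ} (I : Set ℝ) (X : ℝ → Matrix (Fin n) (Fin n) ℝ) (j : ℕ)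
    (x : ℝ) : Matrix (Fin n) (Fin n) ℝ :=
  Bell j (fun i : Fin j => matD I X (i : ℕ) x)

/-- Generalized Wronskian `W_f^k = det(f^{(k_1)} | … | f^{(k_n)})` (derivatives within `I`). -/
noncomputable def genW {n : ℕ} (I : Set ℝ) (f : ℝ → Fin n → ℝ) (k : Fin n → ℕ) (x : ℝ) : ℝ :=
  Matrix.det (Matrix.of fun p q => iteratedDerivWithin (k q) (fun t => f t p) I x)

/-- The multi-index `(n-1, n-2, …, 1, 0)` of the ordinary Wronskian. -/
def wIdx (n : ℕ) : Fin n → ℕ := fun q => n - 1 - (q : ℕ)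

/-- The multi-index `(n+d, n-1, …, j+1, j-1, …, 1, 0)`. -/
def dIdx (n d j : ℕ) : Fin n → ℕ :=
  fun q => if (q : ℕ) = 0 then n + d
    else if j < n - (q : ℕ) then n - (q : ℕ) else n - (q : ℕ) - 1

/-- `Φ_f^{[j]} = (-1)^{n-j-1} W_f^{(n,n-1,…,j+1,j-1,…,0)} / W_f`. -/
noncomputable def Phi {n : ℕ} (I : Set ℝ) (f : ℝ → Fin n → ℝ) (j : ℕ) (x : ℝ) : ℝ :=
  (-1 : ℝ) ^ (n - j - 1) * genW I f (dIdx n 0 j) x / genW I f (wIdx n) x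

/-- The `1`-indexed standard basis vector `e_i` of `ℝ^n`. -/
def stdB (n i : ℕ) : Fin n → ℝ := fun p => if (p : ℕ) + 1 = i then 1 else 0

/-- The matrix `X_a = (a | e_1 | … | e_{n-1})`. -/
def colMat {n : ℕ} (a : ℝ → Fin n → ℝ) (x : ℝ) : Matrix (Fin n) (Fin n) ℝ :=
  Matrix.of fun p q =>
    if (q : ℕ) = 0 then a x p else if (p : ℕ) + 1 = (q : ℕ) then 1 else 0

/-- The matrix `Y_f = (f^{(n-1)} | … | f' | f)` (derivatives within `I`). -/
noncomputable def Yfun {n : ℕ} (I : Set ℝ) (f : ℝ → Fin n → ℝ) (x : ℝ) :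
    Matrix (Fin n) (Fin n) ℝ :=
  Matrix.of fun p q => iteratedDerivWithin (n - 1 - (q : ℕ)) (fun t => f t p) I x

/-- The `1`-indexed component `a_i` of `a : I → ℝ^n`, with `a_i := 0` for `i > n`. -/
noncomputable def aExt {n : ℕ} (a : ℝ → Fin n → ℝ) (i : ℕ) : ℝ → ℝ :=
  fun t => if h : i - 1 < n then a t ⟨i - 1, h⟩ else 0

/-- `y` is an `n`-times differentiable (on `I`) solution of
`y^{(n)} = a_1 y^{(n-1)} + ⋯ + a_n y`, where `a i` is `a_{i+1}`. -/
def SolvesDE {n : ℕ} (I : Set ℝ) (a : ℝ → Fin n → ℝ) (y : ℝ → ℝ) : Prop :=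
  (∀ k < n, DifferentiableOn ℝ (iteratedDerivWithin k y I) I) ∧
    ∀ x ∈ I, iteratedDerivWithin n y I x =
      ∑ i : Fin n, a x i * iteratedDerivWithin (n - 1 - (i : ℕ)) y I x

/-- `f : I → ℝ^n` is a fundamental system of solutions of
`y^{(n)} = a_1 y^{(n-1)} + ⋯ + a_n y`: each component solves the equation and the
components are linearly independent functions on `I`. -/
def FundSystem {n : ℕ} (I : Set ℝ) (a : ℝ → Fin n → ℝ) (f : ℝ → Fin n → ℝ) : Prop :=
  (∀ p : Fin n, SolvesDE I a fun t => f t p) ∧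
    LinearIndependent ℝ fun p : Fin n => I.restrict fun t => f t p

/-! ### Auxiliary lemmas -/

section Aux

/-- Splitting an iterated derivative within a set. -/
theorem aux_iter_add {g : ℝ → ℝ} {s : Set ℝ} (hs : UniqueDiffOn ℝ s) (a b : ℕ) :
    Set.EqOn (iteratedDerivWithin (a + b) g s)
      (iteratedDerivWithin a (iteratedDerivWithin b g s) s) s := by
  induction a with
  | zero => intro x hx; simp
  | succ a ih =>
    intro x hx
    have h1 : a + 1 + b = (a + b) + 1 := by omega
    rw [h1, iteratedDerivWithin_succ,
      iteratedDerivWithin_succ]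
    exact derivWithin_congr ih (ih hx)

/-- Smoothness of iterated derivatives. -/
theorem aux_contDiffOn_iter {s : Set ℝ} (hs : UniqueDiffOn ℝ s) (M : ℕ) :
    ∀ (r : ℕ) (g : ℝ → ℝ), ContDiffOn ℝ ((M + r : ℕ) : ℕ∞) g s →
      ContDiffOn ℝ (M : ℕ∞) (iteratedDerivWithin r g s) s := by
  intro r
  induction r with
  | zero => intro g hg; simpa using hg
  | succ r ih =>
    intro g hg
    have h1 : ContDiffOn ℝ ((M + r : ℕ) : ℕ∞) (derivWithin g s) s := by
      apply hg.derivWithin hs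
      exact_mod_cast Nat.succ_le_of_lt (by omega)
    exact (ih _ h1).congr fun x hx => congrFun iteratedDerivWithin_succ' x

theorem aux_diffOn_iter {s : Set ℝ} (hs : UniqueDiffOn ℝ s) {M r : ℕ} (hr : r < M)
    {g : ℝ → ℝ} (hg : ContDiffOn ℝ (M : ℕ∞) g s) :
    DifferentiableOn ℝ (iteratedDerivWithin r g s) s := by
  apply hg.differentiableOn_iteratedDerivWithin _ hs
  exact_mod_cast hr

/-- Smoothness of the determinant of a matrix of smooth functions. -/
theorem aux_det_smooth {n M : ℕ} {s : Set ℝ} (A : ℝ → Matrix (Fin n) (Fin n) ℝ)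
    (hA : ∀ p q, ContDiffOn ℝ (M : ℕ∞) (fun t => A t p q) s) :
    ContDiffOn ℝ (M : ℕ∞) (fun t => (A t).det) s := by
  have h : ∀ t : ℝ, (A t).det =
      ∑ σ : Equiv.Perm (Fin n), ((Equiv.Perm.sign σ : ℤ) : ℝ) * ∏ i, A t (σ i) i := by
    intro t
    rw [Matrix.det_apply]
    refine Finset.sum_congr rfl fun σ _ => ?_
    rw [Units.smul_def, zsmul_eq_mul]
  refine ContDiffOn.congr ?_ fun x _ => h x
  apply ContDiffOn.sum
  intro σ _
  exact (contDiffOn_const.mul (contDiffOn_prod fun i _ => hA (σ i) i))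

/-- Unfolding of `BellD` at a successor. -/
theorem bellD_succ {n : ℕ} (I : Set ℝ) (X : ℝ → Matrix (Fin n) (Fin n) ℝ) (m : ℕ) (x : ℝ) :
    BellD I X (m + 1) x = ∑ j : Fin (m + 1),
      (Nat.choose m (j : ℕ) : ℝ) • (BellD I X (j : ℕ) x * matD I X (m - (j : ℕ)) x) := by
  rw [BellD, Bell]
  rfl

/-- The auxiliary recursion `C_0 = 1`, `C_{j+1}(x) = X(x) C_j(x) + C_j'(x)`. -/
noncomputable def Cfun {n : ℕ} (I : Set ℝ) (X : ℝ → Matrix (Fin n) (Fin n) ℝ) :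
    ℕ → ℝ → Matrix (Fin n) (Fin n) ℝ
  | 0, _ => 1
  | (j + 1), x => X x * Cfun I X j x +
      Matrix.of fun p q => derivWithin (fun t => Cfun I X j t p q) I x

/-- Smoothness of the entries of `Cfun`. -/
theorem cfun_smooth {n M : ℕ} {I : Set ℝ} (hs : UniqueDiffOn ℝ I)
    {X : ℝ → Matrix (Fin n) (Fin n) ℝ}
    (hX : ∀ p q, ContDiffOn ℝ (M : ℕ∞) (fun t => X t p q) I) :
    ∀ j, j ≤ M + 1 → ∀ p q, ContDiffOn ℝ ((M + 1 - j : ℕ) : ℕ∞)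
      (fun t => Cfun I X j t p q) I := by
  intro j
  induction j with
  | zero =>
    intro _ p q
    exact contDiffOn_const
  | succ j ih =>
    intro hj p q
    have hj' : j ≤ M := by omega
    have hC : ∀ p q, ContDiffOn ℝ ((M + 1 - j : ℕ) : ℕ∞) (fun t => Cfun I X j t p q) I :=
      ih (by omega)
    have hle : ((M - j : ℕ) : WithTop ℕ∞) ≤ ((M + 1 - j : ℕ) : WithTop ℕ∞) := by
      exact_mod_cast Nat.sub_le_sub_right (by omega : M ≤ M + 1) j
    have hD : ContDiffOn ℝ ((M - j : ℕ) : ℕ∞)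
        (derivWithin (fun t => Cfun I X j t p q) I) I := by
      apply (hC p q).derivWithin hs
      have : (M - j) + 1 = M + 1 - j := by omega
      rw [← this]
      exact_mod_cast le_refl _
    have hXC : ContDiffOn ℝ ((M - j : ℕ) : ℕ∞)
        (fun t => (X t * Cfun I X j t) p q) I := by
      have : ∀ t : ℝ, (X t * Cfun I X j t) p q = ∑ r, X t p r * Cfun I X j t r q := by
        intro t; rw [Matrix.mul_apply]
      refine ContDiffOn.congr ?_ fun x _ => this x
      apply ContDiffOn.sum
      intro r _
      exact ((hX p r).of_le (by exact_mod_cast Nat.sub_le M j)).mul ((hC r q).of_le hle)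
    have : M + 1 - (j + 1) = M - j := by omega
    rw [this]
    exact ContDiffOn.congr (hXC.add hD) fun x _ => by
      simp [Cfun, Matrix.add_apply]

/-- On `I`, the entries of `Cfun j` are differentiable with derivative the entries of
`Cfun (j+1) x - X x * Cfun j x`. -/
theorem cfun_hasDeriv {n M : ℕ} {I : Set ℝ} (hIo : IsOpen I)
    {X : ℝ → Matrix (Fin n) (Fin n) ℝ}
    (hX : ∀ p q, ContDiffOn ℝ (M : ℕ∞) (fun t => X t p q) I)
    {j : ℕ} (hj : j ≤ M) {x : ℝ} (hx : x ∈ I) (p q : Fin n) :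
    HasDerivWithinAt (fun t => Cfun I X j t p q)
      ((Cfun I X (j + 1) x - X x * Cfun I X j x) p q) I x := by
  have hdiff : DifferentiableWithinAt ℝ (fun t => Cfun I X j t p q) I x := by
    have := cfun_smooth hIo.uniqueDiffOn hX j (by omega) p q
    have h1 : (1 : ℕ∞) ≤ ((M + 1 - j : ℕ) : ℕ∞) := by
      exact_mod_cast Nat.le_sub_of_add_le (by omega)
    exact (this.differentiableOn (by exact_mod_cast (show M + 1 - j ≠ 0 by omega))) x hx
  have := hdiff.hasDerivWithinAt
  have heq : derivWithin (fun t => Cfun I X j t p q) I x =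
      (Cfun I X (j + 1) x - X x * Cfun I X j x) p q := by
    have : Cfun I X (j + 1) x p q = (X x * Cfun I X j x) p q +
        derivWithin (fun t => Cfun I X j t p q) I x := by
      simp [Cfun, Matrix.add_apply]
    simp [Matrix.sub_apply, this]
  rwa [heq] at this

/-- Derivative of the entries of `matD`. -/
theorem matD_hasDeriv {n M : ℕ} {I : Set ℝ} (hIo : IsOpen I)
    {X : ℝ → Matrix (Fin n) (Fin n) ℝ}
    (hX : ∀ p q, ContDiffOn ℝ (M : ℕ∞) (fun t => X t p q) I)
    {r : ℕ} (hr : r < M) {x : ℝ} (hx : x ∈ I) (p q : Fin n) :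
    HasDerivWithinAt (fun t => matD I X r t p q) (matD I X (r + 1) x p q) I x := by
  have hd := (aux_diffOn_iter hIo.uniqueDiffOn hr (hX p q)) x hx
  have h1 := hd.hasDerivWithinAt
  have heq : derivWithin (iteratedDerivWithin r (fun t => X t p q) I) I x
      = matD I X (r + 1) x p q :=
    (congrFun iteratedDerivWithin_succ x).symm
  rw [heq] at h1
  exact h1

/-- The Pascal-triangle recombination used in the Bell-polynomial recursion. -/
theorem aux_pascal {A : Type*} [Ring A] [Algebra ℝ A] (m' : ℕ) (B D : ℕ → A) (XX : A)
    (hB : B (m' + 1) =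
      ∑ j ∈ Finset.range (m' + 1), (Nat.choose m' j : ℝ) • (B j * D (m' - j))) :
    XX * B (m' + 1) + ∑ j ∈ Finset.range (m' + 1), (Nat.choose m' j : ℝ) •
        ((B (j + 1) - XX * B j) * D (m' - j) + B j * D (m' + 1 - j)) =
      ∑ j ∈ Finset.range (m' + 2), (Nat.choose (m' + 1) j : ℝ) • (B j * D (m' + 1 - j)) := by
  have hsplit : ∀ j ∈ Finset.range (m' + 1), (Nat.choose m' j : ℝ) •
        ((B (j + 1) - XX * B j) * D (m' - j) + B j * D (m' + 1 - j)) =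
      ((Nat.choose m' j : ℝ) • (B (j + 1) * D (m' - j)) +
        (Nat.choose m' j : ℝ) • (B j * D (m' + 1 - j)))
        - XX * ((Nat.choose m' j : ℝ) • (B j * D (m' - j))) := by
    intro j _
    simp only [smul_add, sub_mul, smul_sub, mul_smul_comm, mul_assoc]
    abel
  rw [Finset.sum_congr rfl hsplit, Finset.sum_sub_distrib, ← Finset.mul_sum, ← hB,
    add_sub_cancel, Finset.sum_add_distrib]
  rw [Finset.sum_range_succ'
    (fun j => (Nat.choose (m' + 1) j : ℝ) • (B j * D (m' + 1 - j))) (m' + 1)]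
  rw [Finset.sum_range_succ'
    (fun j => (Nat.choose m' j : ℝ) • (B j * D (m' + 1 - j))) m']
  have hext : ∑ j ∈ Finset.range m',
        (Nat.choose m' (j + 1) : ℝ) • (B (j + 1) * D (m' + 1 - (j + 1))) =
      ∑ j ∈ Finset.range (m' + 1),
        (Nat.choose m' (j + 1) : ℝ) • (B (j + 1) * D (m' - j)) := by
    rw [Finset.sum_range_succ]
    simp [Nat.choose_succ_self, Nat.succ_sub_succ]
  rw [hext]
  rw [← add_assoc, ← Finset.sum_add_distrib]
  congr 1
  · refine Finset.sum_congr rfl fun j _ => ?_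
    rw [← add_smul, Nat.succ_sub_succ]
    congr 1
    rw [Nat.choose_succ_succ]
    push_cast
    ring
  · simp

/-- The simple recursion `Cfun` agrees with the noncommutative Bell polynomials. -/
theorem cfun_eq_bellD {n M : ℕ} {I : Set ℝ} (hIo : IsOpen I)
    {X : ℝ → Matrix (Fin n) (Fin n) ℝ}
    (hX : ∀ p q, ContDiffOn ℝ (M : ℕ∞) (fun t => X t p q) I) :
    ∀ j, j ≤ M + 1 → ∀ x ∈ I, Cfun I X j x = BellD I X j x := by
  have hUD : UniqueDiffOn ℝ I := hIo.uniqueDiffOn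
  intro j
  induction j using Nat.strong_induction_on with
  | _ j IH =>
  match j with
  | 0 =>
    intro _ x hx
    show (1 : Matrix (Fin n) (Fin n) ℝ) = Bell 0 _
    rw [Bell]
  | (m + 1) =>
    intro hj x hx
    have hmM : m ≤ M := by omega
    have hB0 : ∀ (t : ℝ), BellD I X 0 t = 1 := by
      intro t; rw [BellD, Bell]
    -- derivatives of the entries of `BellD j` for `j ≤ m`
    have hBd : ∀ j : ℕ, j < m → ∀ (y : ℝ), y ∈ I → ∀ p q : Fin n,
        HasDerivWithinAt (fun t => BellD I X j t p q)
          ((BellD I X (j + 1) y - X y * BellD I X j y) p q) I y := by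
      intro j hjm y hy p q
      have h1 := cfun_hasDeriv hIo hX (j := j) (by omega) hy p q
      have h2 : HasDerivWithinAt (fun t => BellD I X j t p q)
          ((Cfun I X (j + 1) y - X y * Cfun I X j y) p q) I y := by
        refine h1.congr (fun z hz => ?_) ?_
        · rw [IH j (by omega) (by omega) z hz]
        · rw [IH j (by omega) (by omega) y hy]
      rw [IH (j + 1) (by omega) (by omega) y hy, IH j (by omega) (by omega) y hy] at h2
      exact h2
    have hCm := IH m (by omega) (by omega)
    have hstep : Cfun I X (m + 1) x = X x * BellD I X m x +
        Matrix.of (fun p q => derivWithin (fun t => BellD I X m t p q) I x) := by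
      show X x * Cfun I X m x + _ = _
      rw [hCm x hx]
      congr 1
      ext p q
      simp only [Matrix.of_apply]
      exact derivWithin_congr (fun z hz => by rw [hCm z hz]) (by rw [hCm x hx])
    rcases Nat.eq_zero_or_pos m with hm0 | hmpos
    · subst hm0
      have hD0 : (Matrix.of fun p q => derivWithin (fun t => BellD I X 0 t p q) I x)
          = (0 : Matrix (Fin n) (Fin n) ℝ) := by
        ext p q
        simp only [Matrix.of_apply]
        have hfe : (fun t => BellD I X 0 t p q) =
            fun _ => (1 : Matrix (Fin n) (Fin n) ℝ) p q := by
          funext t; rw [hB0 t]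
        rw [hfe,
          (hasDerivWithinAt_const x I ((1 : Matrix (Fin n) (Fin n) ℝ) p q)).derivWithin
            (hUD.uniqueDiffWithinAt hx)]
        exact (Matrix.zero_apply p q).symm
      rw [hstep, hD0, add_zero, hB0, mul_one, bellD_succ]
      rw [Fin.sum_univ_one]
      have : matD I X 0 x = X x := by
        ext p q; simp [matD]
      simp [hB0, this]
    · obtain ⟨m', rfl⟩ := Nat.exists_eq_succ_of_ne_zero hmpos.ne'
      -- the matrix of derivatives of `BellD (m'+1)`
      set V : Matrix (Fin n) (Fin n) ℝ := ∑ j : Fin (m' + 1), (Nat.choose m' (j : ℕ) : ℝ) •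
          ((BellD I X ((j : ℕ) + 1) x - X x * BellD I X (j : ℕ) x) * matD I X (m' - (j : ℕ)) x
            + BellD I X (j : ℕ) x * matD I X (m' - (j : ℕ) + 1) x) with hV_def
      have hV : ∀ p q : Fin n, HasDerivWithinAt (fun t => BellD I X (m' + 1) t p q)
          (V p q) I x := by
        intro p q
        have hsum : ∀ t : ℝ, BellD I X (m' + 1) t p q = ∑ j : Fin (m' + 1),
            (Nat.choose m' (j : ℕ) : ℝ) *
              (∑ r, BellD I X (j : ℕ) t p r * matD I X (m' - (j : ℕ)) t r q) := by
          intro t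
          rw [bellD_succ]
          simp [Matrix.sum_apply, Matrix.smul_apply, Matrix.mul_apply, smul_eq_mul]
        have hder : HasDerivWithinAt (fun t => ∑ j : Fin (m' + 1),
            (Nat.choose m' (j : ℕ) : ℝ) *
              (∑ r, BellD I X (j : ℕ) t p r * matD I X (m' - (j : ℕ)) t r q))
            (∑ j : Fin (m' + 1), (Nat.choose m' (j : ℕ) : ℝ) *
              (∑ r, ((BellD I X ((j : ℕ) + 1) x - X x * BellD I X (j : ℕ) x) p r *
                  matD I X (m' - (j : ℕ)) x r q
                + BellD I X (j : ℕ) x p r * matD I X (m' - (j : ℕ) + 1) x r q))) I x := by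
          apply HasDerivWithinAt.fun_sum
          intro j _
          apply HasDerivWithinAt.const_mul
          apply HasDerivWithinAt.fun_sum
          intro r _
          exact (hBd (j : ℕ) (by have := j.isLt; omega) x hx p r).mul
            (matD_hasDeriv hIo hX (by have := j.isLt; omega) hx r q)
        have h2 := hder.congr (fun z _ => hsum z) (hsum x)
        have hval : V p q = ∑ j : Fin (m' + 1), (Nat.choose m' (j : ℕ) : ℝ) *
            (∑ r, ((BellD I X ((j : ℕ) + 1) x - X x * BellD I X (j : ℕ) x) p r *
                matD I X (m' - (j : ℕ)) x r q
              + BellD I X (j : ℕ) x p r * matD I X (m' - (j : ℕ) + 1) x r q)) := by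
          rw [hV_def]
          simp only [Matrix.sum_apply, Matrix.smul_apply, Matrix.add_apply, Matrix.mul_apply,
            Matrix.sub_apply, smul_eq_mul, Finset.sum_add_distrib, Finset.mul_sum]
        rw [hval]
        exact h2
      have hDeq : (Matrix.of fun p q =>
          derivWithin (fun t => BellD I X (m' + 1) t p q) I x) = V := by
        ext p q
        simp only [Matrix.of_apply]
        exact (hV p q).derivWithin (hUD.uniqueDiffWithinAt hx)
      rw [hstep, hDeq, hV_def]
      -- convert to range sums and apply the Pascal lemma
      have hBm : BellD I X (m' + 1) x = ∑ j ∈ Finset.range (m' + 1),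
          (Nat.choose m' j : ℝ) • (BellD I X j x * matD I X (m' - j) x) := by
        rw [bellD_succ]
        exact Fin.sum_univ_eq_sum_range
          (fun j => (Nat.choose m' j : ℝ) • (BellD I X j x * matD I X (m' - j) x)) (m' + 1)
      have hVr : (∑ j : Fin (m' + 1), (Nat.choose m' (j : ℕ) : ℝ) •
          ((BellD I X ((j : ℕ) + 1) x - X x * BellD I X (j : ℕ) x) * matD I X (m' - (j : ℕ)) x
            + BellD I X (j : ℕ) x * matD I X (m' - (j : ℕ) + 1) x)) =
          ∑ j ∈ Finset.range (m' + 1), (Nat.choose m' j : ℝ) •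
          ((BellD I X (j + 1) x - X x * BellD I X j x) * matD I X (m' - j) x
            + BellD I X j x * matD I X (m' + 1 - j) x) := by
        rw [Fin.sum_univ_eq_sum_range (fun j => (Nat.choose m' j : ℝ) •
          ((BellD I X (j + 1) x - X x * BellD I X j x) * matD I X (m' - j) x
            + BellD I X j x * matD I X (m' - j + 1) x)) (m' + 1)]
        refine Finset.sum_congr rfl fun j hj => ?_
        have hj' : j ≤ m' := by
          simpa [Nat.lt_succ_iff] using Finset.mem_range.mp hj
        have : m' - j + 1 = m' + 1 - j := by omega
        rw [this]
      rw [hVr]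
      have hRHS : BellD I X (m' + 1 + 1) x = ∑ j ∈ Finset.range (m' + 2),
          (Nat.choose (m' + 1) j : ℝ) • (BellD I X j x * matD I X (m' + 1 - j) x) := by
        rw [bellD_succ]
        exact Fin.sum_univ_eq_sum_range
          (fun j => (Nat.choose (m' + 1) j : ℝ) •
            (BellD I X j x * matD I X (m' + 1 - j) x)) (m' + 2)
      rw [hRHS]
      exact aux_pascal m' (fun j => BellD I X j x) (fun r => matD I X r x) (X x) hBm

theorem dIdx_apply (n d j : ℕ) (q : Fin n) : dIdx n d j q =
    if (q : ℕ) = 0 then n + d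
      else if j < n - (q : ℕ) then n - (q : ℕ) else n - (q : ℕ) - 1 := rfl

/-- Cramer's rule: `Y_f *ᵥ a = f⁽ⁿ⁾` where `a_i = Φ_f^{[n-1-i]}`. -/
theorem phi_mulVec {n : ℕ} {I : Set ℝ} (f : ℝ → Fin (n + 1) → ℝ)
    (hW : ∀ x ∈ I, genW I f (wIdx (n + 1)) x ≠ 0) {x : ℝ} (hx : x ∈ I) :
    (Yfun I f x) *ᵥ (fun i : Fin (n + 1) => Phi I f (n + 1 - 1 - (i : ℕ)) x) =
      (fun p => iteratedDerivWithin (n + 1) (fun t => f t p) I x) := by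
  set A := Yfun I f x with hA_def
  set b : Fin (n + 1) → ℝ := fun p => iteratedDerivWithin (n + 1) (fun t => f t p) I x
    with hb_def
  have hdet : A.det = genW I f (wIdx (n + 1)) x := rfl
  have hdet0 : A.det ≠ 0 := by rw [hdet]; exact hW x hx
  have hupd : ∀ q : Fin (n + 1), (A.updateCol q b).det =
      (-1 : ℝ) ^ (q : ℕ) * genW I f (dIdx (n + 1) 0 (n - (q : ℕ))) x := by
    intro q
    have hq : (q : ℕ) ≤ n := Nat.lt_succ_iff.mp q.isLt
    have hsub : (Matrix.of fun p c => iteratedDerivWithin (dIdx (n + 1) 0 (n - (q : ℕ)) c)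
        (fun t => f t p) I x).submatrix id (Fin.cycleRange q) = A.updateCol q b := by
      ext p j
      rw [Matrix.submatrix_apply, Matrix.updateCol_apply, id]
      rcases lt_trichotomy j q with h | h | h
      · rw [if_neg h.ne]
        have hc : ((Fin.cycleRange q j) : ℕ) = (j : ℕ) + 1 := Fin.coe_cycleRange_of_lt h
        have hjq : (j : ℕ) < (q : ℕ) := h
        show iteratedDerivWithin (dIdx (n + 1) 0 (n - (q : ℕ)) (Fin.cycleRange q j))
            (fun t => f t p) I x
          = iteratedDerivWithin (n + 1 - 1 - (j : ℕ)) (fun t => f t p) I x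
        congr 1
        rw [dIdx_apply, hc]
        split_ifs <;> first | contradiction | omega
      · subst h
        rw [if_pos rfl, Fin.cycleRange_self]
        show iteratedDerivWithin (dIdx (n + 1) 0 (n - (j : ℕ)) 0) (fun t => f t p) I x = b p
        rfl
      · rw [if_neg h.ne', Fin.cycleRange_of_gt h]
        have hjq : (q : ℕ) < (j : ℕ) := h
        have hj0 : (j : ℕ) ≠ 0 := by omega
        have hjn : (j : ℕ) ≤ n := Nat.lt_succ_iff.mp j.isLt
        show iteratedDerivWithin (dIdx (n + 1) 0 (n - (q : ℕ)) j) (fun t => f t p) I x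
          = iteratedDerivWithin (n + 1 - 1 - (j : ℕ)) (fun t => f t p) I x
        congr 1
        rw [dIdx_apply]
        split_ifs <;> first | contradiction | omega
    calc (A.updateCol q b).det
        = ((Matrix.of fun p c => iteratedDerivWithin (dIdx (n + 1) 0 (n - (q : ℕ)) c)
            (fun t => f t p) I x).submatrix id (Fin.cycleRange q)).det := by rw [hsub]
      _ = (-1 : ℝ) ^ (q : ℕ) * genW I f (dIdx (n + 1) 0 (n - (q : ℕ))) x := by
          rw [Matrix.det_permute', Fin.sign_cycleRange]
          norm_num [genW]
  have hPhi : ∀ q : Fin (n + 1), Phi I f (n + 1 - 1 - (q : ℕ)) x =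
      (A.det)⁻¹ * (A.updateCol q b).det := by
    intro q
    have hq : (q : ℕ) ≤ n := Nat.lt_succ_iff.mp q.isLt
    have hginv : genW I f (dIdx (n + 1) 0 (n - (q : ℕ))) x =
        (-1 : ℝ) ^ (q : ℕ) * (A.updateCol q b).det := by
      rw [hupd, ← mul_assoc, ← pow_add,
        Even.neg_one_pow ⟨(q : ℕ), by ring⟩, one_mul]
    have h1 : n + 1 - 1 - (q : ℕ) = n - (q : ℕ) := by omega
    have h2 : n + 1 - (n - (q : ℕ)) - 1 = (q : ℕ) := by omega
    rw [h1, Phi, h2, hginv, ← hdet, ← mul_assoc, ← pow_add,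
      Even.neg_one_pow ⟨(q : ℕ), by ring⟩, one_mul, div_eq_mul_inv, mul_comm]
  have ha : (fun i : Fin (n + 1) => Phi I f (n + 1 - 1 - (i : ℕ)) x)
      = (A.det)⁻¹ • Matrix.cramer A b := by
    funext q
    rw [hPhi q, Pi.smul_apply, smul_eq_mul, Matrix.cramer_apply]
  rw [ha, Matrix.mulVec_smul, Matrix.mulVec_cramer, smul_smul, inv_mul_cancel₀ hdet0, one_smul]

theorem colMat_apply {n : ℕ} (a : ℝ → Fin n → ℝ) (x : ℝ) (p q : Fin n) :
    colMat a x p q =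
      if (q : ℕ) = 0 then a x p else if (p : ℕ) + 1 = (q : ℕ) then 1 else 0 := rfl

/-- Smoothness of `genW`. -/
theorem genW_smooth {n m M : ℕ} {I : Set ℝ} (hIo : IsOpen I) (f : ℝ → Fin n → ℝ)
    (hf : ∀ p, ContDiffOn ℝ ((m : ℕ) : ℕ∞) (fun t => f t p) I)
    (k : Fin n → ℕ) (hk : ∀ q, M + k q ≤ m) :
    ContDiffOn ℝ (M : ℕ∞) (genW I f k) I := by
  have h := aux_det_smooth
    (fun t => Matrix.of fun p q => iteratedDerivWithin (k q) (fun s => f s p) I t)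
    (fun p q => aux_contDiffOn_iter hIo.uniqueDiffOn M (k q) (fun s => f s p)
      ((hf p).of_le (by exact_mod_cast hk q)))
  exact h

/-- Smoothness of the entries of `X_a` with `a` given by the `Φ`'s. -/
theorem phiX_smooth {n m : ℕ} {I : Set ℝ} (hIo : IsOpen I) (hmn : n + 1 ≤ m)
    (f : ℝ → Fin (n + 1) → ℝ)
    (hf : ∀ p, ContDiffOn ℝ ((m : ℕ) : ℕ∞) (fun t => f t p) I)
    (hW : ∀ x ∈ I, genW I f (wIdx (n + 1)) x ≠ 0) :
    ∀ p q, ContDiffOn ℝ (((m - (n + 1) : ℕ)) : ℕ∞)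
      (fun t => colMat (fun s (i : Fin (n + 1)) => Phi I f (n + 1 - 1 - (i : ℕ)) s) t p q) I := by
  intro p q
  have hcol : (fun t => colMat (fun s (i : Fin (n + 1)) => Phi I f (n + 1 - 1 - (i : ℕ)) s) t p q) =
      if (q : ℕ) = 0 then (fun t => Phi I f (n + 1 - 1 - (p : ℕ)) t)
      else (fun _ => if (p : ℕ) + 1 = (q : ℕ) then (1 : ℝ) else 0) := by
    funext t
    rw [colMat_apply]
    split_ifs <;> rfl
  rw [hcol]
  split_ifs with h h2
  · have hnum : ContDiffOn ℝ (((m - (n + 1) : ℕ)) : ℕ∞)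
        (genW I f (dIdx (n + 1) 0 (n + 1 - 1 - (p : ℕ)))) I := by
      apply genW_smooth hIo f hf
      intro q'
      have : dIdx (n + 1) 0 (n + 1 - 1 - (p : ℕ)) q' ≤ n + 1 := by
        rw [dIdx_apply]; split_ifs <;> omega
      omega
    have hden : ContDiffOn ℝ (((m - (n + 1) : ℕ)) : ℕ∞) (genW I f (wIdx (n + 1))) I := by
      apply genW_smooth hIo f hf
      intro q'
      have : wIdx (n + 1) q' ≤ n := by unfold wIdx; omega
      omega
    exact ContDiffOn.div (contDiffOn_const.mul hnum) hden hW
  · exact contDiffOn_const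
  · exact contDiffOn_const

/-- The first-order system `Y' = Y ⬝ X_a` satisfied by the Wronskian matrix. -/
theorem ode_entry {n m : ℕ} {I : Set ℝ} (hIo : IsOpen I) (hmn : n + 1 ≤ m)
    (f : ℝ → Fin (n + 1) → ℝ)
    (hf : ∀ p, ContDiffOn ℝ ((m : ℕ) : ℕ∞) (fun t => f t p) I)
    (hW : ∀ x ∈ I, genW I f (wIdx (n + 1)) x ≠ 0) {x : ℝ} (hx : x ∈ I)
    (p q : Fin (n + 1)) :
    HasDerivWithinAt (fun t => Yfun I f t p q)
      ((Yfun I f x * colMat (fun t (i : Fin (n + 1)) => Phi I f (n + 1 - 1 - (i : ℕ)) t) x) p q) I x := by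
  have hUD : UniqueDiffOn ℝ I := hIo.uniqueDiffOn
  have hdiff : DifferentiableWithinAt ℝ
      (iteratedDerivWithin (n + 1 - 1 - (q : ℕ)) (fun t => f t p) I) I x :=
    (aux_diffOn_iter hUD (show n + 1 - 1 - (q : ℕ) < m by omega) (hf p)) x hx
  have h1 := hdiff.hasDerivWithinAt
  have hder : derivWithin (iteratedDerivWithin (n + 1 - 1 - (q : ℕ)) (fun t => f t p) I) I x
      = (Yfun I f x * colMat (fun t (i : Fin (n + 1)) => Phi I f (n + 1 - 1 - (i : ℕ)) t) x) p q := by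
    rw [← iteratedDerivWithin_succ]
    rcases Nat.eq_zero_or_pos (q : ℕ) with h0 | hpos
    · have hq0 : q = 0 := Fin.ext h0
      subst hq0
      have hb := congrFun (phi_mulVec f hW hx) p
      have he : n + 1 - 1 - ((0 : Fin (n + 1)) : ℕ) + 1 = n + 1 := by
        simp
      rw [he, ← hb, Matrix.mul_apply, Matrix.mulVec, dotProduct]
      refine Finset.sum_congr rfl fun r _ => ?_
      congr 1
    · rw [Matrix.mul_apply]
      rw [Finset.sum_eq_single (⟨(q : ℕ) - 1, by omega⟩ : Fin (n + 1))]
      · have hcm : colMat (fun t (i : Fin (n + 1)) => Phi I f (n + 1 - 1 - (i : ℕ)) t) x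
            ⟨(q : ℕ) - 1, by omega⟩ q = 1 := by
          rw [colMat_apply, if_neg (by omega), if_pos (by simp; omega)]
        rw [hcm, mul_one]
        show iteratedDerivWithin _ _ I x = iteratedDerivWithin _ _ I x
        congr 1
        show n + 1 - 1 - (q : ℕ) + 1 = n + 1 - 1 - ((q : ℕ) - 1)
        omega
      · intro r _ hr
        have hz : colMat (fun t (i : Fin (n + 1)) => Phi I f (n + 1 - 1 - (i : ℕ)) t) x r q = 0 := by
          rw [colMat_apply, if_neg (by omega), if_neg ?_]
          intro hc
          exact hr (Fin.ext (by simp; omega))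
        rw [hz, mul_zero]
      · intro hmem
        exact absurd (Finset.mem_univ _) hmem
  rw [hder] at h1
  exact h1

/-- `Y⁽ℓ⁾ = Y ⬝ C_ℓ` entrywise. -/
theorem matDY {n m : ℕ} {I : Set ℝ} (hIo : IsOpen I) (hmn : n + 1 ≤ m)
    (f : ℝ → Fin (n + 1) → ℝ)
    (hf : ∀ p, ContDiffOn ℝ ((m : ℕ) : ℕ∞) (fun t => f t p) I)
    (hW : ∀ x ∈ I, genW I f (wIdx (n + 1)) x ≠ 0) :
    ∀ ℓ, ℓ ≤ (m - (n + 1)) + 1 → ∀ x ∈ I, ∀ p q,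
      iteratedDerivWithin ℓ (fun t => Yfun I f t p q) I x =
        (Yfun I f x * Cfun I (colMat fun t (i : Fin (n + 1)) => Phi I f (n + 1 - 1 - (i : ℕ)) t) ℓ x) p q := by
  have hUD : UniqueDiffOn ℝ I := hIo.uniqueDiffOn
  set Xa := colMat fun t (i : Fin (n + 1)) => Phi I f (n + 1 - 1 - (i : ℕ)) t with hXa
  have hX : ∀ p q, ContDiffOn ℝ (((m - (n + 1) : ℕ)) : ℕ∞) (fun t => Xa t p q) I :=
    phiX_smooth hIo hmn f hf hW
  intro ℓ
  induction ℓ with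
  | zero =>
    intro _ x hx p q
    show (fun t => Yfun I f t p q) x =
      (Yfun I f x * (1 : Matrix (Fin (n + 1)) (Fin (n + 1)) ℝ)) p q
    rw [mul_one]
  | succ ℓ ih =>
    intro hℓ x hx p q
    rw [iteratedDerivWithin_succ]
    have hEq : Set.EqOn (iteratedDerivWithin ℓ (fun t => Yfun I f t p q) I)
        (fun t => ∑ r, Yfun I f t p r * Cfun I Xa ℓ t r q) I := by
      intro z hz
      rw [ih (by omega) z hz, Matrix.mul_apply]
    rw [derivWithin_congr hEq (hEq hx)]
    have hs : HasDerivWithinAt (fun t => ∑ r, Yfun I f t p r * Cfun I Xa ℓ t r q)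
        (∑ r, ((Yfun I f x * Xa x) p r * Cfun I Xa ℓ x r q
          + Yfun I f x p r * (Cfun I Xa (ℓ + 1) x - Xa x * Cfun I Xa ℓ x) r q)) I x := by
      apply HasDerivWithinAt.fun_sum
      intro r _
      exact (ode_entry hIo hmn f hf hW hx p r).mul (cfun_hasDeriv hIo hX (by omega) hx r q)
    have hval : (∑ r, ((Yfun I f x * Xa x) p r * Cfun I Xa ℓ x r q
          + Yfun I f x p r * (Cfun I Xa (ℓ + 1) x - Xa x * Cfun I Xa ℓ x) r q))
        = (Yfun I f x * Xa x * Cfun I Xa ℓ x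
          + Yfun I f x * (Cfun I Xa (ℓ + 1) x - Xa x * Cfun I Xa ℓ x)) p q := by
      simp [Matrix.add_apply, Matrix.mul_apply, Finset.sum_add_distrib]
    rw [hs.derivWithin (hUD.uniqueDiffWithinAt hx), hval]
    have hmat : Yfun I f x * Xa x * Cfun I Xa ℓ x
        + Yfun I f x * (Cfun I Xa (ℓ + 1) x - Xa x * Cfun I Xa ℓ x)
        = Yfun I f x * Cfun I Xa (ℓ + 1) x := by
      noncomm_ring
    rw [hmat]

end Aux

/-- for an `m`-times continuously differentiable `f` (`m ≥ n`) with
nonvanishing Wronskian, defining `a_j := Φ_f^{[n-j]}`, the generalized Wronskian formula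
`W_f^k = W_f · det(B_{ℓ_1}(X_a,…) e_{n+ℓ_1-k_1} | … | B_{ℓ_n}(X_a,…) e_{n+ℓ_n-k_n})`
holds on `I` whenever all `k_i ≤ m`, where `ℓ_i = max(k_i-n+1, 0)`. -/
theorem stmt_13 (n m : ℕ) (hn : 0 < n) (hmn : n ≤ m) (I : Set ℝ) (hIo : IsOpen I)
    (hIne : I.Nonempty) (hIc : I.OrdConnected) (f : ℝ → Fin n → ℝ)
    (hf : ∀ p : Fin n, ContDiffOn ℝ ((m : ℕ) : ℕ∞) (fun t => f t p) I)
    (hW : ∀ x ∈ I, genW I f (wIdx n) x ≠ 0) :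
    ∀ k : Fin n → ℕ, (∀ q, k q ≤ m) → ∀ x ∈ I,
      genW I f k x = genW I f (wIdx n) x *
        Matrix.det (Matrix.of fun p q =>
          (BellD I (colMat fun t i => Phi I f (n - 1 - (i : ℕ)) t) (k q + 1 - n) x).mulVec
            (stdB n (n + (k q + 1 - n) - k q)) p) := by
  obtain ⟨n', rfl⟩ := Nat.exists_eq_succ_of_ne_zero hn.ne'
  intro k hk x hx
  have hUD : UniqueDiffOn ℝ I := hIo.uniqueDiffOn
  set Xa := colMat fun t (i : Fin (n' + 1)) => Phi I f (n' + 1 - 1 - (i : ℕ)) t with hXa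
  have hX : ∀ p q, ContDiffOn ℝ (((m - (n' + 1) : ℕ)) : ℕ∞) (fun t => Xa t p q) I :=
    phiX_smooth hIo hmn f hf hW
  have hcol : ∀ q : Fin (n' + 1), ∀ p : Fin (n' + 1),
      iteratedDerivWithin (k q) (fun t => f t p) I x =
      ∑ r, Yfun I f x p r *
        (BellD I Xa (k q + 1 - (n' + 1)) x).mulVec
          (stdB (n' + 1) ((n' + 1) + (k q + 1 - (n' + 1)) - k q)) r := by
    intro q p
    have hkm := hk q
    rcases lt_or_ge (k q) (n' + 1) with hlt | hge
    · -- small orders: `ℓ = 0`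
      have hz : k q + 1 - (n' + 1) = 0 := by omega
      rw [hz]
      have hB0 : BellD I Xa 0 x = 1 := by rw [BellD, Bell]
      have he : (n' + 1) + 0 - k q = n' + 1 - k q := by omega
      rw [hB0, he, Matrix.one_mulVec]
      rw [Finset.sum_eq_single (⟨n' - k q, by omega⟩ : Fin (n' + 1))]
      · have h1 : stdB (n' + 1) (n' + 1 - k q) ⟨n' - k q, by omega⟩ = 1 := by
          show (if n' - k q + 1 = n' + 1 - k q then (1 : ℝ) else 0) = 1
          rw [if_pos (by omega)]
        rw [h1, mul_one]
        show iteratedDerivWithin (k q) (fun t => f t p) I x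
          = iteratedDerivWithin (n' + 1 - 1 - (n' - k q)) (fun t => f t p) I x
        congr 1
        omega
      · intro r _ hr
        have h0 : stdB (n' + 1) (n' + 1 - k q) r = 0 := by
          show (if (r : ℕ) + 1 = n' + 1 - k q then (1 : ℝ) else 0) = 0
          have : ¬((r : ℕ) + 1 = n' + 1 - k q) := by
            intro hc
            apply hr
            apply Fin.ext
            show (r : ℕ) = n' - k q
            omega
          rw [if_neg this]
        rw [h0, mul_zero]
      · intro hmem
        exact absurd (Finset.mem_univ _) hmem
    · -- large orders
      set ℓ := k q + 1 - (n' + 1) with hl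
      have hkq : k q = ℓ + n' := by omega
      have he : (n' + 1) + ℓ - k q = 1 := by omega
      rw [he]
      have h2 : ∀ r, (BellD I Xa ℓ x).mulVec (stdB (n' + 1) 1) r
          = BellD I Xa ℓ x r ⟨0, by omega⟩ := by
        intro r
        rw [Matrix.mulVec, dotProduct]
        rw [Finset.sum_eq_single (⟨0, by omega⟩ : Fin (n' + 1))]
        · have h1 : stdB (n' + 1) 1 (⟨0, by omega⟩ : Fin (n' + 1)) = 1 := by
            show (if 0 + 1 = 1 then (1 : ℝ) else 0) = 1
            rw [if_pos rfl]
          rw [h1, mul_one]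
        · intro s _ hs
          have h0 : stdB (n' + 1) 1 s = 0 := by
            show (if (s : ℕ) + 1 = 1 then (1 : ℝ) else 0) = 0
            have : ¬((s : ℕ) + 1 = 1) := by
              intro hc
              apply hs
              apply Fin.ext
              show (s : ℕ) = 0
              omega
            rw [if_neg this]
          rw [h0, mul_zero]
        · intro hmem
          exact absurd (Finset.mem_univ _) hmem
      have hmain := matDY hIo hmn f hf hW ℓ (by omega) x hx p ⟨0, by omega⟩
      have hcb := cfun_eq_bellD hIo hX ℓ (by omega) x hx
      calc iteratedDerivWithin (k q) (fun t => f t p) I x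
          = iteratedDerivWithin ℓ (iteratedDerivWithin n' (fun t => f t p) I) I x := by
            rw [hkq]; exact aux_iter_add hUD ℓ n' hx
        _ = (Yfun I f x * Cfun I Xa ℓ x) p ⟨0, by omega⟩ := hmain
        _ = (Yfun I f x * BellD I Xa ℓ x) p ⟨0, by omega⟩ := by rw [hcb]
        _ = ∑ r, Yfun I f x p r * (BellD I Xa ℓ x).mulVec (stdB (n' + 1) 1) r := by
            rw [Matrix.mul_apply]
            exact Finset.sum_congr rfl fun r _ => by rw [h2 r]
  have hmat : (Matrix.of fun p q => iteratedDerivWithin (k q) (fun t => f t p) I x)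
      = Yfun I f x * (Matrix.of fun p q =>
          (BellD I Xa (k q + 1 - (n' + 1)) x).mulVec
            (stdB (n' + 1) ((n' + 1) + (k q + 1 - (n' + 1)) - k q)) p) := by
    ext p q
    rw [Matrix.mul_apply]
    exact hcol q p
  show Matrix.det (Matrix.of fun p q => iteratedDerivWithin (k q) (fun t => f t p) I x) = _
  rw [hmat, Matrix.det_mul]
  rfl
end

section
/- Let f, g : I → ℝ^n be n-times continuously differentiable functions such that both Wronskians W_f and W_g are nonvanishing on I. Then f and g are range equivalent (i.e., there exists a nonsingular n×n real matrix A with f = A·g on I) if and only if Φ_f^{[j]} = Φ_g^{[j]} on I for every j ∈ {0, ..., n−1}. -/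
open Matrix

lemma genW_eq_det {n : ℕ} (I : Set ℝ) (f : ℝ → Fin n → ℝ) (x : ℝ) :
    genW I f (wIdx n) x = (Yfun I f x).det := rfl

lemma cycRange_val {n : ℕ} (q r : Fin n) :
    ((q.cycleRange r) : ℕ)
      = if (r : ℕ) < (q : ℕ) then (r : ℕ) + 1 else if (r : ℕ) = (q : ℕ) then 0 else (r : ℕ) := by
  obtain ⟨m, rfl⟩ : ∃ m, n = m + 1 := ⟨n - 1, by have := q.isLt; omega⟩
  rcases Nat.lt_trichotomy (r : ℕ) (q : ℕ) with h | h | h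
  · rw [Fin.coe_cycleRange_of_lt h, if_pos h]
  · have : r = q := Fin.ext h
    subst this
    rw [Fin.cycleRange_self]
    simp
  · rw [Fin.cycleRange_of_gt h]
    rw [if_neg (by omega), if_neg (by omega)]

lemma keyDE {n : ℕ} (hn : 0 < n) {I : Set ℝ} (hIo : IsOpen I) {f : ℝ → Fin n → ℝ}
    (hWf : ∀ x ∈ I, genW I f (wIdx n) x ≠ 0) {x : ℝ} (hx : x ∈ I) (p : Fin n) :
    iteratedDerivWithin n (fun t => f t p) I x
      = ∑ q : Fin n, Phi I f (n - 1 - (q : ℕ)) x * Yfun I f x p q := by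
  set Y := Yfun I f x with hYdef
  set v : Fin n → ℝ := fun p => iteratedDerivWithin n (fun t => f t p) I x with hvdef
  have hY : Y.det ≠ 0 := by rw [← genW_eq_det]; exact hWf x hx
  have hcr : ∀ q : Fin n, cramer Y v q
      = (-1 : ℝ) ^ (q : ℕ) * genW I f (dIdx n 0 (n - 1 - (q : ℕ))) x := by
    intro q
    rw [Matrix.cramer_apply]
    have hB : Y.updateCol q v
        = (Matrix.of fun p c => iteratedDerivWithin (dIdx n 0 (n - 1 - (q : ℕ)) c)
            (fun t => f t p) I x).submatrix id q.cycleRange := by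
      ext p r
      rw [Matrix.updateCol_apply]
      simp only [Matrix.submatrix_apply, id_eq, Matrix.of_apply]
      have hval := cycRange_val q r
      have hqlt := q.isLt
      have hrlt := r.isLt
      by_cases h : r = q
      · subst h
        rw [if_pos rfl]
        have h0 : ((r.cycleRange r) : ℕ) = 0 := by rw [hval]; simp
        have : dIdx n 0 (n - 1 - (r : ℕ)) (r.cycleRange r) = n := by
          simp [dIdx, h0]
        rw [this]
      · have hne : (r : ℕ) ≠ (q : ℕ) := fun hh => h (Fin.ext hh)
        rw [if_neg h]
        have hYe : Y p r = iteratedDerivWithin (n - 1 - (r : ℕ)) (fun t => f t p) I x := rfl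
        rw [hYe]
        congr 1
        rcases Nat.lt_or_ge (r : ℕ) (q : ℕ) with hlt | hge
        · have h0 : ((q.cycleRange r) : ℕ) = (r : ℕ) + 1 := by rw [hval, if_pos hlt]
          simp only [dIdx, h0]
          split_ifs <;> first | omega | (exfalso; assumption)
        · have hgt : (q : ℕ) < (r : ℕ) := by omega
          have h0 : ((q.cycleRange r) : ℕ) = (r : ℕ) := by
            rw [hval, if_neg (by omega), if_neg hne]
          simp only [dIdx, h0]
          split_ifs <;> first | omega | (exfalso; assumption)
    rw [hB, Matrix.det_permute', Fin.sign_cycleRange]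
    have hG : genW I f (dIdx n 0 (n - 1 - (q : ℕ))) x
        = (Matrix.of fun p c => iteratedDerivWithin (dIdx n 0 (n - 1 - (q : ℕ)) c)
            (fun t => f t p) I x).det := rfl
    rw [hG]
    push_cast
    ring
  have hc2 : (fun q : Fin n => Phi I f (n - 1 - (q : ℕ)) x) = Y.det⁻¹ • cramer Y v := by
    funext q
    rw [Pi.smul_apply, hcr q, smul_eq_mul, Phi]
    have he : n - (n - 1 - (q : ℕ)) - 1 = (q : ℕ) := by have := q.isLt; omega
    rw [he, genW_eq_det, ← hYdef]
    field_simp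
  have hsum : Y *ᵥ (fun q : Fin n => Phi I f (n - 1 - (q : ℕ)) x) = v := by
    rw [hc2, Matrix.mulVec_smul, Matrix.mulVec_cramer, smul_smul, inv_mul_cancel₀ hY, one_smul]
  have hp := congrFun hsum p
  have hYe : ∀ q, Y p q = Yfun I f x p q := fun q => rfl
  rw [show iteratedDerivWithin n (fun t => f t p) I x = v p from rfl, ← hp]
  simp [Matrix.mulVec, dotProduct, mul_comm]

/-- Companion-type matrix built from the `Φ` invariants. -/
noncomputable def CMat {n : ℕ} (I : Set ℝ) (f : ℝ → Fin n → ℝ) (x : ℝ) :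
    Matrix (Fin n) (Fin n) ℝ :=
  Matrix.of fun q r => if (q : ℕ) = 0 then Phi I f (n - 1 - (r : ℕ)) x
    else if (r : ℕ) + 1 = (q : ℕ) then 1 else 0

lemma hasDerivAt_iter {I : Set ℝ} (hIo : IsOpen I) {n k : ℕ} {f1 : ℝ → ℝ}
    (hf : ContDiffOn ℝ ((n : ℕ) : ℕ∞) f1 I) (hk : k < n) {x : ℝ} (hx : x ∈ I) :
    HasDerivAt (iteratedDerivWithin k f1 I) (iteratedDerivWithin (k + 1) f1 I x) x := by
  have hu : UniqueDiffOn ℝ I := hIo.uniqueDiffOn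
  have hd := (hf.differentiableOn_iteratedDerivWithin (by exact_mod_cast hk) hu) x hx
  have h2 := hd.hasDerivWithinAt
  rw [← iteratedDerivWithin_succ] at h2
  exact h2.hasDerivAt (hIo.mem_nhds hx)

/-- Each row of `Yfun` solves the linear system `v' = CMat · v`. -/
lemma rowODE {n : ℕ} (hn : 0 < n) {I : Set ℝ} (hIo : IsOpen I) {f : ℝ → Fin n → ℝ}
    (hf : ∀ p : Fin n, ContDiffOn ℝ ((n : ℕ) : ℕ∞) (fun t => f t p) I)
    (hWf : ∀ x ∈ I, genW I f (wIdx n) x ≠ 0) (p : Fin n) {x : ℝ} (hx : x ∈ I) :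
    HasDerivAt (fun t => (fun q => Yfun I f t p q))
      (CMat I f x *ᵥ (fun q => Yfun I f x p q)) x := by
  rw [hasDerivAt_pi]
  intro q
  have hk : n - 1 - (q : ℕ) < n := by have := q.isLt; omega
  have hder := hasDerivAt_iter hIo (hf p) hk hx
  have hkk : n - 1 - (q : ℕ) + 1 = n - (q : ℕ) := by have := q.isLt; omega
  rw [hkk] at hder
  have hgoal : (CMat I f x *ᵥ (fun q => Yfun I f x p q)) q
      = iteratedDerivWithin (n - (q : ℕ)) (fun t => f t p) I x := by
    by_cases h0 : (q : ℕ) = 0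
    · have : ∀ r : Fin n, CMat I f x q r = Phi I f (n - 1 - (r : ℕ)) x := fun r => by
        simp [CMat, h0]
      simp only [Matrix.mulVec, dotProduct, this, h0, Nat.sub_zero]
      exact (keyDE hn hIo hWf hx p).symm
    · have hq1 : 1 ≤ (q : ℕ) := by omega
      set r0 : Fin n := ⟨(q : ℕ) - 1, by omega⟩ with hr0
      have hcm : ∀ r : Fin n, CMat I f x q r = if r = r0 then 1 else 0 := fun r => by
        simp only [CMat, Matrix.of_apply, h0, if_false]
        have : ((r : ℕ) + 1 = (q : ℕ)) ↔ r = r0 := by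
          rw [Fin.ext_iff]; simp [hr0]; omega
        simp [this]
      simp only [Matrix.mulVec, dotProduct, hcm, ite_mul, one_mul, zero_mul]
      rw [Finset.sum_ite_eq' Finset.univ r0 (fun q => Yfun I f x p q)]
      simp only [Finset.mem_univ, if_true]
      have : Yfun I f x p r0 = iteratedDerivWithin (n - 1 - ((q : ℕ) - 1)) (fun t => f t p) I x :=
        rfl
      rw [this]
      congr 1
      omega
  rw [hgoal]
  exact hder


lemma iter_zero_fun {I : Set ℝ} (hIo : IsOpen I) {k : ℕ} {x : ℝ} (hx : x ∈ I) :
    iteratedDerivWithin k (fun _ : ℝ => (0 : ℝ)) I x = 0 := by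
  have hu : UniqueDiffOn ℝ I := hIo.uniqueDiffOn
  have h := iteratedFDerivWithin_zero_fun (𝕜 := ℝ) (E := ℝ) (F := ℝ) (s := I) (i := k)
  simp only [iteratedDerivWithin, h]
  rfl

lemma iter_comb {N : ℕ} {k n : ℕ} {I : Set ℝ} (hIo : IsOpen I) {x : ℝ} (hx : x ∈ I)
    (hk : k ≤ n) (c : Fin N → ℝ) (u : Fin N → ℝ → ℝ)
    (hu : ∀ r, ContDiffOn ℝ ((n : ℕ) : ℕ∞) (u r) I) (s : Finset (Fin N)) :
    iteratedDerivWithin k (fun t => ∑ r ∈ s, c r * u r t) I x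
      = ∑ r ∈ s, c r * iteratedDerivWithin k (u r) I x := by
  have hud : UniqueDiffOn ℝ I := hIo.uniqueDiffOn
  classical
  induction s using Finset.induction with
  | empty => simpa using iter_zero_fun hIo hx (k := k)
  | @insert a s ha ih =>
    have hca : ContDiffOn ℝ k (fun t => c a * u a t) I :=
      ((hu a).of_le (by exact_mod_cast hk)).const_smul (c a)
    have hcs : ContDiffOn ℝ k (fun t => ∑ r ∈ s, c r * u r t) I := by
      have : ∀ r ∈ s, ContDiffOn ℝ (k : ℕ∞) (fun t => c r * u r t) I := fun r _ =>
        ((hu r).of_le (by exact_mod_cast hk)).const_smul (c r)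
      simpa using ContDiffOn.sum this
    have := iteratedDerivWithin_add hx hud (hca x hx) (hcs x hx)
      (f := fun t => c a * u a t) (g := fun t => ∑ r ∈ s, c r * u r t)
    simp only [Finset.sum_insert ha]
    rw [← ih]
    have heq : (fun t => c a * u a t + ∑ r ∈ s, c r * u r t)
        = (fun t => c a * u a t) + (fun t => ∑ r ∈ s, c r * u r t) := rfl
    rw [heq, this, iteratedDerivWithin_const_mul hx hud (c a) (((hu a).of_le (by exact_mod_cast hk)) x hx)]

lemma genW_mul {n : ℕ} {I : Set ℝ} (hIo : IsOpen I) {x : ℝ} (hx : x ∈ I)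
    (A : Matrix (Fin n) (Fin n) ℝ) {f g : ℝ → Fin n → ℝ}
    (hg : ∀ p : Fin n, ContDiffOn ℝ ((n : ℕ) : ℕ∞) (fun t => g t p) I)
    (hfg : ∀ t ∈ I, f t = A.mulVec (g t)) (k : Fin n → ℕ) (hk : ∀ q, k q ≤ n) :
    genW I f k x = A.det * genW I g k x := by
  have hu : UniqueDiffOn ℝ I := hIo.uniqueDiffOn
  have hent : ∀ (p : Fin n) (q : Fin n),
      iteratedDerivWithin (k q) (fun t => f t p) I x
        = ∑ r : Fin n, A p r * iteratedDerivWithin (k q) (fun t => g t r) I x := by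
    intro p q
    have heqon : Set.EqOn (fun t => f t p) (fun t => ∑ r : Fin n, A p r * g t r) I := by
      intro t ht
      have := congrFun (hfg t ht) p
      simpa [Matrix.mulVec, dotProduct] using this
    rw [iteratedDerivWithin_congr heqon hx]
    exact iter_comb hIo hx (hk q) (fun r => A p r) (fun r t => g t r) (fun r => hg r) _
  have hM : (Matrix.of fun p q => iteratedDerivWithin (k q) (fun t => f t p) I x)
      = A * (Matrix.of fun p q => iteratedDerivWithin (k q) (fun t => g t p) I x) := by
    ext p q
    rw [Matrix.mul_apply]
    simpa using hent p q
  show (Matrix.of fun p q => iteratedDerivWithin (k q) (fun t => f t p) I x).det = _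
  rw [hM, Matrix.det_mul]
  rfl

lemma contOn_genW {n : ℕ} {I : Set ℝ} (hIo : IsOpen I) {f : ℝ → Fin n → ℝ}
    (hf : ∀ p : Fin n, ContDiffOn ℝ ((n : ℕ) : ℕ∞) (fun t => f t p) I)
    (k : Fin n → ℕ) (hk : ∀ q, k q ≤ n) : ContinuousOn (genW I f k) I := by
  have hu : UniqueDiffOn ℝ I := hIo.uniqueDiffOn
  have hM : ContinuousOn (fun x => (Matrix.of fun p q =>
      iteratedDerivWithin (k q) (fun t => f t p) I x : Matrix (Fin n) (Fin n) ℝ)) I := by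
    apply continuousOn_pi.2
    intro p
    apply continuousOn_pi.2
    intro q
    exact (hf p).continuousOn_iteratedDerivWithin (by exact_mod_cast hk q) hu
  exact (Continuous.matrix_det continuous_id).comp_continuousOn hM

lemma contOn_Phi {n : ℕ} {I : Set ℝ} (hIo : IsOpen I) {f : ℝ → Fin n → ℝ}
    (hf : ∀ p : Fin n, ContDiffOn ℝ ((n : ℕ) : ℕ∞) (fun t => f t p) I)
    (hWf : ∀ x ∈ I, genW I f (wIdx n) x ≠ 0) (j : ℕ) :
    ContinuousOn (Phi I f j) I := by
  have h1 : ContinuousOn (genW I f (dIdx n 0 j)) I :=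
    contOn_genW hIo hf _ (fun q => by simp only [dIdx]; split_ifs <;> omega)
  have h2 : ContinuousOn (genW I f (wIdx n)) I :=
    contOn_genW hIo hf _ (fun q => by simp only [wIdx]; omega)
  have : ContinuousOn (fun x => (-1 : ℝ) ^ (n - j - 1) * genW I f (dIdx n 0 j) x
      / genW I f (wIdx n) x) I :=
    (continuousOn_const.mul h1).div h2 hWf
  exact this

lemma lipschitz_mulVec {n : ℕ} (M : Matrix (Fin n) (Fin n) ℝ) {B : ℝ} (hB : 0 ≤ B)
    (h : ∀ q r, |M q r| ≤ B) :
    LipschitzWith ⟨n * B, by positivity⟩ (fun y : Fin n → ℝ => M *ᵥ y) := by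
  apply LipschitzWith.of_dist_le_mul
  intro y y'
  rw [dist_eq_norm, dist_eq_norm, ← Matrix.mulVec_sub]
  set z := y - y'
  have hz : ∀ r, |z r| ≤ ‖z‖ := fun r => by
    have := norm_le_pi_norm z r
    simpa [Real.norm_eq_abs] using this
  have hb : ∀ q, ‖(M *ᵥ z) q‖ ≤ (n * B) * ‖z‖ := by
    intro q
    rw [Real.norm_eq_abs]
    calc |(M *ᵥ z) q| = |∑ r, M q r * z r| := by simp [Matrix.mulVec, dotProduct]
    _ ≤ ∑ r, |M q r * z r| := Finset.abs_sum_le_sum_abs _ _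
    _ ≤ ∑ _r : Fin n, B * ‖z‖ := by
        apply Finset.sum_le_sum
        intro r _
        rw [abs_mul]
        exact mul_le_mul (h q r) (hz r) (abs_nonneg _) hB
    _ = (n * B) * ‖z‖ := by simp [Finset.sum_const]; ring
  have hnonneg : 0 ≤ (n * B) * ‖z‖ := by positivity
  change ‖M *ᵥ z‖ ≤ (n * B) * ‖z‖
  exact (pi_norm_le_iff_of_nonneg hnonneg).2 hb

lemma exists_Ioo {I : Set ℝ} (hIo : IsOpen I) (hIc : I.OrdConnected) {x0 x : ℝ}
    (h0 : x0 ∈ I) (h1 : x ∈ I) :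
    ∃ a b : ℝ, x0 ∈ Set.Ioo a b ∧ x ∈ Set.Ioo a b ∧ Set.Icc a b ⊆ I := by
  rcases Metric.isOpen_iff.1 hIo x0 h0 with ⟨d1, hd1, hb1⟩
  rcases Metric.isOpen_iff.1 hIo x h1 with ⟨d2, hd2, hb2⟩
  set d := min d1 d2 with hd
  have hdpos : 0 < d := lt_min hd1 hd2
  set m := min x0 x
  set M := max x0 x
  have hmM : m ≤ M := min_le_max
  have hm0 : m ≤ x0 := min_le_left _ _
  have hm1 : m ≤ x := min_le_right _ _
  have hM0 : x0 ≤ M := le_max_left _ _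
  have hM1 : x ≤ M := le_max_right _ _
  refine ⟨m - d / 2, M + d / 2, ⟨by linarith, by linarith⟩, ⟨by linarith, by linarith⟩, ?_⟩
  intro t ht
  obtain ⟨hta, htb⟩ := ht
  rcases lt_or_ge t m with h | h
  · rcases min_choice x0 x with hc | hc
    · apply hb1
      rw [Metric.mem_ball, Real.dist_eq, abs_of_nonpos (by rw [← hc]; linarith)]
      have : d ≤ d1 := min_le_left _ _
      rw [← hc] at *
      linarith
    · apply hb2
      rw [Metric.mem_ball, Real.dist_eq, abs_of_nonpos (by rw [← hc]; linarith)]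
      have : d ≤ d2 := min_le_right _ _
      rw [← hc] at *
      linarith
  · rcases le_or_gt t M with h2 | h2
    · have hmem : m ∈ I := by
        rcases min_choice x0 x with hc | hc <;> (show min x0 x ∈ I) <;> rw [hc] <;> assumption
      have hMem : M ∈ I := by
        rcases max_choice x0 x with hc | hc <;> (show max x0 x ∈ I) <;> rw [hc] <;> assumption
      exact hIc.out hmem hMem ⟨h, h2⟩
    · rcases max_choice x0 x with hc | hc
      · apply hb1
        rw [Metric.mem_ball, Real.dist_eq, abs_of_nonneg (by rw [← hc]; linarith)]
        have : d ≤ d1 := min_le_left _ _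
        rw [← hc] at *
        linarith
      · apply hb2
        rw [Metric.mem_ball, Real.dist_eq, abs_of_nonneg (by rw [← hc]; linarith)]
        have : d ≤ d2 := min_le_right _ _
        rw [← hc] at *
        linarith

lemma backward_main {n : ℕ} (hn : 0 < n) {I : Set ℝ} (hIo : IsOpen I) (hIne : I.Nonempty)
    (hIc : I.OrdConnected) {f g : ℝ → Fin n → ℝ}
    (hf : ∀ p : Fin n, ContDiffOn ℝ ((n : ℕ) : ℕ∞) (fun t => f t p) I)
    (hg : ∀ p : Fin n, ContDiffOn ℝ ((n : ℕ) : ℕ∞) (fun t => g t p) I)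
    (hWf : ∀ x ∈ I, genW I f (wIdx n) x ≠ 0)
    (hWg : ∀ x ∈ I, genW I g (wIdx n) x ≠ 0)
    (hPhi : ∀ j < n, ∀ x ∈ I, Phi I f j x = Phi I g j x) :
    ∃ A : Matrix (Fin n) (Fin n) ℝ, A.det ≠ 0 ∧ ∀ x ∈ I, f x = A.mulVec (g x) := by
  obtain ⟨x0, hx0⟩ := hIne
  set Yf0 := Yfun I f x0 with hYf0
  set Yg0 := Yfun I g x0 with hYg0
  have hdf0 : Yf0.det ≠ 0 := by rw [← genW_eq_det]; exact hWf x0 hx0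
  have hdg0 : Yg0.det ≠ 0 := by rw [← genW_eq_det]; exact hWg x0 hx0
  set A := Yf0 * Yg0⁻¹ with hA
  have hdetA : A.det ≠ 0 := by
    rw [hA, Matrix.det_mul, Matrix.det_nonsing_inv]
    simp only [Ring.inverse_eq_inv']
    exact mul_ne_zero hdf0 (inv_ne_zero hdg0)
  have hAg : A * Yg0 = Yf0 := by
    rw [hA, Matrix.mul_assoc, Matrix.nonsing_inv_mul _ (isUnit_iff_ne_zero.2 hdg0),
      Matrix.mul_one]
  have hCM : ∀ t ∈ I, CMat I f t = CMat I g t := by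
    intro t ht
    ext q r
    simp only [CMat, Matrix.of_apply]
    by_cases h0 : (q : ℕ) = 0
    · simp only [h0, if_true]
      exact hPhi (n - 1 - (r : ℕ)) (by omega) t ht
    · simp [h0]
  have hmain : ∀ x ∈ I, ∀ p q : Fin n,
      Yfun I f x p q = ∑ r : Fin n, A p r * Yfun I g x r q := by
    intro x hx p
    set F : ℝ → Fin n → ℝ := fun t q => Yfun I f t p q with hF
    set G : ℝ → Fin n → ℝ := fun t q => ∑ r : Fin n, A p r * Yfun I g t r q with hG
    obtain ⟨a, b, h0ab, hxab, hsub⟩ := exists_Ioo hIo hIc hx0 hx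
    have hbnd : ∀ r : Fin n, ∃ C, ∀ t ∈ Set.Icc a b, ‖Phi I g (n - 1 - (r : ℕ)) t‖ ≤ C :=
      fun r => IsCompact.exists_bound_of_continuousOn isCompact_Icc
        ((contOn_Phi hIo hg hWg _).mono hsub)
    choose C hC using hbnd
    set B : ℝ := 1 + ∑ r : Fin n, |C r| with hBdef
    have hsumC : (0 : ℝ) ≤ ∑ r : Fin n, |C r| :=
      Finset.sum_nonneg fun r _ => abs_nonneg _
    have hB1 : (1 : ℝ) ≤ B := by rw [hBdef]; linarith
    have hB0 : (0 : ℝ) ≤ B := by linarith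
    have hent : ∀ t ∈ Set.Icc a b, ∀ q r : Fin n, |CMat I g t q r| ≤ B := by
      intro t ht q r
      simp only [CMat, Matrix.of_apply]
      split_ifs with h1 h2
      · have h3 := hC r t ht
        rw [Real.norm_eq_abs] at h3
        have h4 : C r ≤ |C r| := le_abs_self _
        have h5 : |C r| ≤ ∑ r' : Fin n, |C r'| :=
          Finset.single_le_sum (fun r' _ => abs_nonneg (C r')) (Finset.mem_univ r)
        rw [hBdef]; linarith
      · simpa using hB1
      · simpa using hB0
    set K : NNReal := ⟨n * B, by positivity⟩ with hK
    set v : ℝ → (Fin n → ℝ) → (Fin n → ℝ) :=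
      fun t y => if t ∈ Set.Icc a b then CMat I g t *ᵥ y else 0 with hv
    have hlip : ∀ t, LipschitzOnWith K (v t) Set.univ := by
      intro t
      by_cases ht : t ∈ Set.Icc a b
      · have hl := lipschitz_mulVec (CMat I g t) hB0 (fun q r => hent t ht q r)
        have hveq : v t = fun y => CMat I g t *ᵥ y := by
          funext y
          show (if t ∈ Set.Icc a b then CMat I g t *ᵥ y else 0) = _
          rw [if_pos ht]
        rw [hveq]
        exact hl.lipschitzOnWith
      · have hveq : v t = fun _ => (0 : Fin n → ℝ) := by
          funext y
          show (if t ∈ Set.Icc a b then CMat I g t *ᵥ y else 0) = _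
          rw [if_neg ht]
        rw [hveq]
        exact ((LipschitzWith.const _).weaken zero_le).lipschitzOnWith
    have hderF : ∀ t ∈ Set.Ioo a b, HasDerivAt F (v t (F t)) t ∧ F t ∈ Set.univ := by
      intro t ht
      have htI : t ∈ I := hsub (Set.Ioo_subset_Icc_self ht)
      have hvt : v t (F t) = CMat I g t *ᵥ F t := by
        show (if t ∈ Set.Icc a b then CMat I g t *ᵥ F t else 0) = _
        rw [if_pos (Set.Ioo_subset_Icc_self ht)]
      rw [hvt, ← hCM t htI]
      exact ⟨rowODE hn hIo hf hWf p htI, trivial⟩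
    have hderG : ∀ t ∈ Set.Ioo a b, HasDerivAt G (v t (G t)) t ∧ G t ∈ Set.univ := by
      intro t ht
      have htI : t ∈ I := hsub (Set.Ioo_subset_Icc_self ht)
      refine ⟨?_, trivial⟩
      have hvt : v t (G t) = CMat I g t *ᵥ G t := by
        show (if t ∈ Set.Icc a b then CMat I g t *ᵥ G t else 0) = _
        rw [if_pos (Set.Ioo_subset_Icc_self ht)]
      rw [hvt, hasDerivAt_pi]
      intro q
      have hcomp : ∀ r : Fin n, HasDerivAt (fun t' => Yfun I g t' r q)
          ((CMat I g t *ᵥ fun q' => Yfun I g t r q') q) t :=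
        fun r => (hasDerivAt_pi.1 (rowODE hn hIo hg hWg r htI)) q
      have hsum := HasDerivAt.fun_sum (u := Finset.univ)
        (fun r _ => ((hcomp r).const_mul (A p r)))
      convert hsum using 1
      simp only [Matrix.mulVec, dotProduct, hG, Finset.mul_sum]
      conv_lhs => rw [Finset.sum_comm]
      exact Finset.sum_congr rfl fun r _ => Finset.sum_congr rfl fun s _ => by ring
    have heq0 : F x0 = G x0 := by
      funext q
      have h1 : (A * Yg0) p q = ∑ r : Fin n, A p r * Yg0 r q := Matrix.mul_apply
      have h2 : F x0 q = Yf0 p q := rfl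
      rw [h2, ← hAg, h1]
    have := ODE_solution_unique_of_mem_Ioo (fun t _ => hlip t) h0ab hderF hderG heq0 hxab
    intro q
    exact congrFun this q
  refine ⟨A, hdetA, ?_⟩
  intro x hx
  funext p
  have hlast : (⟨n - 1, by omega⟩ : Fin n) = ⟨n - 1, by omega⟩ := rfl
  set lq : Fin n := ⟨n - 1, by omega⟩ with hlq
  have hf0 : f x p = Yfun I f x p lq := by
    show f x p = iteratedDerivWithin (n - 1 - ((lq : Fin n) : ℕ)) (fun t => f t p) I x
    have : n - 1 - ((lq : Fin n) : ℕ) = 0 := by simp [hlq]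
    rw [this, iteratedDerivWithin_zero]
  have hg0 : ∀ r, g x r = Yfun I g x r lq := by
    intro r
    show g x r = iteratedDerivWithin (n - 1 - ((lq : Fin n) : ℕ)) (fun t => g t r) I x
    have : n - 1 - ((lq : Fin n) : ℕ) = 0 := by simp [hlq]
    rw [this, iteratedDerivWithin_zero]
  rw [hf0, hmain x hx p lq]
  simp only [Matrix.mulVec, dotProduct]
  apply Finset.sum_congr rfl
  intro r _
  rw [hg0 r]

/-- for `n`-times continuously differentiable `f, g` with nonvanishing
Wronskians, `f` and `g` are range equivalent (`f = A·g` for a nonsingular matrix `A`)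
iff `Φ_f^{[j]} = Φ_g^{[j]}` on `I` for all `0 ≤ j ≤ n-1`. -/
theorem stmt_15 (n : ℕ) (hn : 0 < n) (I : Set ℝ) (hIo : IsOpen I) (hIne : I.Nonempty)
    (hIc : I.OrdConnected) (f g : ℝ → Fin n → ℝ)
    (hf : ∀ p : Fin n, ContDiffOn ℝ ((n : ℕ) : ℕ∞) (fun t => f t p) I)
    (hg : ∀ p : Fin n, ContDiffOn ℝ ((n : ℕ) : ℕ∞) (fun t => g t p) I)
    (hWf : ∀ x ∈ I, genW I f (wIdx n) x ≠ 0)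
    (hWg : ∀ x ∈ I, genW I g (wIdx n) x ≠ 0) :
    (∃ A : Matrix (Fin n) (Fin n) ℝ, A.det ≠ 0 ∧ ∀ x ∈ I, f x = A.mulVec (g x)) ↔
      ∀ j < n, ∀ x ∈ I, Phi I f j x = Phi I g j x := by
  constructor
  · rintro ⟨A, hdA, hfg⟩ j hj x hx
    have h1 : genW I f (dIdx n 0 j) x = A.det * genW I g (dIdx n 0 j) x :=
      genW_mul hIo hx A hg hfg _ (fun q => by simp only [dIdx]; split_ifs <;> omega)
    have h2 : genW I f (wIdx n) x = A.det * genW I g (wIdx n) x :=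
      genW_mul hIo hx A hg hfg _ (fun q => by simp only [wIdx]; omega)
    rw [Phi, Phi, h1, h2,
      show (-1 : ℝ) ^ (n - j - 1) * (A.det * genW I g (dIdx n 0 j) x)
        = A.det * ((-1 : ℝ) ^ (n - j - 1) * genW I g (dIdx n 0 j) x) by ring,
      mul_div_mul_left _ _ hdA]
  · intro hPhi
    exact backward_main hn hIo hIne hIc hf hg hWf hWg hPhi
end

section
/- Let f, g : I → ℝ^n be n-times continuously differentiable functions with nonvanishing Wronskians W_f and W_g on I, and suppose Φ_f^{[j]} = Φ_g^{[j]} on I for every j ∈ {0, ..., n−1}. Then each component of f is a linear combination (with constant real coefficients) of the components of g, and the resulting n×n coefficient matrix A with f = A·g is nonsingular. -/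
open Matrix

/-! ### Auxiliary machinery for the proof -/

attribute [local instance] Matrix.linftyOpNormedAddCommGroup Matrix.linftyOpNormedSpace
  Matrix.linftyOpNormedRing Matrix.linftyOpNormedAlgebra

/-- The identity, as a continuous linear equivalence between matrices (with the `L∞`-operator
norm) and the plain pi type. -/
noncomputable def matCLE (n : ℕ) : Matrix (Fin n) (Fin n) ℝ ≃L[ℝ] (Fin n → Fin n → ℝ) :=
  LinearEquiv.toContinuousLinearEquiv
    (LinearEquiv.refl ℝ (Matrix (Fin n) (Fin n) ℝ) :
      Matrix (Fin n) (Fin n) ℝ ≃ₗ[ℝ] (Fin n → Fin n → ℝ))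

theorem hasDerivWithinAt_matrix {n : ℕ} {A : ℝ → Matrix (Fin n) (Fin n) ℝ}
    {A' : Matrix (Fin n) (Fin n) ℝ} {s : Set ℝ} {x : ℝ}
    (h : ∀ p q, HasDerivWithinAt (fun t => A t p q) (A' p q) s x) :
    HasDerivWithinAt A A' s x := by
  have key : HasDerivWithinAt (fun t => matCLE n (A t)) (matCLE n A') s x :=
    hasDerivWithinAt_pi.2 fun p => hasDerivWithinAt_pi.2 fun q => h p q
  rw [hasDerivWithinAt_iff_hasFDerivWithinAt] at key ⊢
  exact ((matCLE n).comp_hasFDerivWithinAt_iff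
    (f := A) (s := s) (x := x) (f' := ContinuousLinearMap.smulRight (1 : ℝ →L[ℝ] ℝ) A')).1 key

theorem hasDeriv_iter {f : ℝ → ℝ} {I : Set ℝ} (hIo : IsOpen I) {n k : ℕ}
    (hf : ContDiffOn ℝ (n : ℕ∞) f I) (hk : k < n) {x : ℝ} (hx : x ∈ I) :
    HasDerivWithinAt (iteratedDerivWithin k f I) (iteratedDerivWithin (k + 1) f I x) I x := by
  have hu : UniqueDiffOn ℝ I := hIo.uniqueDiffOn
  have hdiff : DifferentiableOn ℝ (iteratedDerivWithin k f I) I :=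
    hf.differentiableOn_iteratedDerivWithin (by exact_mod_cast hk) hu
  have := (hdiff x hx).hasDerivWithinAt
  rwa [← iteratedDerivWithin_succ] at this

/-- The cycle sending `0 ↦ r`, `q ↦ q-1` for `1 ≤ q ≤ r`, `q ↦ q` for `q > r`. -/
def cyc {n : ℕ} (r : Fin n) : Equiv.Perm (Fin n) where
  toFun q := ⟨if (q : ℕ) = 0 then (r : ℕ) else if (q : ℕ) ≤ (r : ℕ) then (q : ℕ) - 1 else (q : ℕ),
    by split_ifs <;> omega⟩
  invFun s := ⟨if (s : ℕ) = (r : ℕ) then 0 else if (s : ℕ) < (r : ℕ) then (s : ℕ) + 1 else (s : ℕ),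
    by have := r.pos; split_ifs <;> omega⟩
  left_inv q := Fin.ext (by simp only [Fin.val_mk]; split_ifs <;> simp_all <;> omega)
  right_inv s := Fin.ext (by simp only [Fin.val_mk]; split_ifs <;> simp_all <;> omega)

theorem genW_dIdx_eq {n : ℕ} (I : Set ℝ) (f : ℝ → Fin n → ℝ) (x : ℝ) (r : Fin n) :
    genW I f (dIdx n 0 (n - 1 - (r : ℕ))) x =
      (Equiv.Perm.sign (cyc r) : ℝ) *
        (((Matrix.of fun p q => iteratedDerivWithin (wIdx n q) (fun t => f t p) I x).updateCol
          r (fun p => iteratedDerivWithin n (fun t => f t p) I x)).det) := by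
  have hM : (Matrix.of fun p q => iteratedDerivWithin (dIdx n 0 (n - 1 - (r : ℕ)) q)
        (fun t => f t p) I x) =
      ((Matrix.of fun p q => iteratedDerivWithin (wIdx n q) (fun t => f t p) I x).updateCol
          r (fun p => iteratedDerivWithin n (fun t => f t p) I x)).submatrix id (cyc r) := by
    ext p q
    simp only [Matrix.submatrix_apply, id, Matrix.updateCol_apply, Matrix.of_apply, cyc,
      Equiv.coe_fn_mk, dIdx, wIdx, Fin.ext_iff, Fin.val_mk]
    split_ifs <;> (try congr 1) <;> omega
  rw [genW, hM, Matrix.det_permute']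

/-- Coefficient vector of the linear ODE satisfied by `f`. -/
noncomputable def cvec {n : ℕ} (I : Set ℝ) (f : ℝ → Fin n → ℝ) (x : ℝ) (r : Fin n) : ℝ :=
  (Equiv.Perm.sign (cyc r) : ℝ) *
    (genW I f (dIdx n 0 (n - 1 - (r : ℕ))) x / genW I f (wIdx n) x)

theorem rowRel {n : ℕ} {I : Set ℝ} {f : ℝ → Fin n → ℝ} {x : ℝ}
    (hW : genW I f (wIdx n) x ≠ 0) (p : Fin n) :
    iteratedDerivWithin n (fun t => f t p) I x =
      ∑ r : Fin n, iteratedDerivWithin (wIdx n r) (fun t => f t p) I x * cvec I f x r := by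
  set Y : Matrix (Fin n) (Fin n) ℝ :=
    Matrix.of fun p q => iteratedDerivWithin (wIdx n q) (fun t => f t p) I x with hY
  set b : Fin n → ℝ := fun p => iteratedDerivWithin n (fun t => f t p) I x with hb
  have hdet : Y.det = genW I f (wIdx n) x := rfl
  have hcv : ∀ r, cvec I f x r = (Y.updateCol r b).det / Y.det := by
    intro r
    have hsgn : (Equiv.Perm.sign (cyc r) : ℝ) * (Equiv.Perm.sign (cyc r) : ℝ) = 1 := by
      rcases Int.units_eq_one_or (Equiv.Perm.sign (cyc r)) with h | h <;> rw [h] <;> norm_num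
    rw [cvec, genW_dIdx_eq I f x r, hdet]
    field_simp
    ring_nf
    rw [sq, hsgn, one_mul, hY, hb]
  have hbp : Y.det • b = Y.mulVec (Matrix.cramer Y b) := (Matrix.mulVec_cramer Y b).symm
  have hthis := congrFun hbp p
  simp only [Pi.smul_apply, smul_eq_mul, Matrix.mulVec, dotProduct] at hthis
  rw [hdet] at hthis
  calc b p = (genW I f (wIdx n) x)⁻¹ * (genW I f (wIdx n) x * b p) := by field_simp
    _ = (genW I f (wIdx n) x)⁻¹ * ∑ r, Y p r * Matrix.cramer Y b r := by rw [hthis]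
    _ = ∑ r, Y p r * ((Y.updateCol r b).det / Y.det) := by
        rw [Finset.mul_sum]
        refine Finset.sum_congr rfl fun r _ => ?_
        rw [Matrix.cramer_apply, hdet]
        ring
    _ = ∑ r : Fin n, iteratedDerivWithin (wIdx n r) (fun t => f t p) I x * cvec I f x r := by
        refine Finset.sum_congr rfl fun r _ => ?_
        rw [hcv r]
        rfl

theorem detM_ne {n : ℕ} {I : Set ℝ} {f : ℝ → Fin n → ℝ} {x : ℝ}
    (hW : genW I f (wIdx n) x ≠ 0) :
    (Matrix.of fun p q : Fin n => iteratedDerivWithin (p : ℕ) (fun t => f t q) I x).det ≠ 0 := by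
  have hM : (Matrix.of fun p q : Fin n => iteratedDerivWithin (p : ℕ) (fun t => f t q) I x) =
      ((Matrix.of fun p q => iteratedDerivWithin (wIdx n q) (fun t => f t p) I x)ᵀ).submatrix
        Fin.revPerm id := by
    ext p q
    simp only [Matrix.submatrix_apply, Matrix.transpose_apply, Matrix.of_apply, id, wIdx,
      Fin.revPerm_apply, Fin.val_rev]
    congr 1
    omega
  rw [hM, Matrix.det_permute, Matrix.det_transpose]
  simp only [ne_eq, mul_eq_zero, not_or]
  constructor
  · rcases Int.units_eq_one_or (Equiv.Perm.sign (Fin.revPerm : Equiv.Perm (Fin n))) with h | h <;>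
      rw [h] <;> norm_num
  · exact hW

/-- The companion matrix built from a coefficient function `c`. -/
noncomputable def compM {n : ℕ} (hn : 0 < n) (c : ℝ → Fin n → ℝ) (x : ℝ) :
    Matrix (Fin n) (Fin n) ℝ :=
  Matrix.of fun p j => if (p : ℕ) + 1 < n then (if (j : ℕ) = (p : ℕ) + 1 then (1 : ℝ) else 0)
    else c x (Fin.rev j)

theorem matDeriv {n : ℕ} (hn : 0 < n) {I : Set ℝ} (hIo : IsOpen I) {f : ℝ → Fin n → ℝ}
    (hf : ∀ p : Fin n, ContDiffOn ℝ ((n : ℕ) : ℕ∞) (fun t => f t p) I)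
    (hWf : ∀ x ∈ I, genW I f (wIdx n) x ≠ 0)
    (c : ℝ → Fin n → ℝ) (hc : ∀ x ∈ I, ∀ r, c x r = cvec I f x r)
    {x : ℝ} (hx : x ∈ I) :
    HasDerivWithinAt
      (fun t => Matrix.of fun p q : Fin n => iteratedDerivWithin (p : ℕ) (fun s => f s q) I t)
      (compM hn c x *
        (Matrix.of fun p q : Fin n => iteratedDerivWithin (p : ℕ) (fun s => f s q) I x)) I x := by
  apply hasDerivWithinAt_matrix
  intro p q
  by_cases hp : (p : ℕ) + 1 < n
  · have hval : (compM hn c x *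
        (Matrix.of fun p q : Fin n => iteratedDerivWithin (p : ℕ) (fun s => f s q) I x)) p q =
        iteratedDerivWithin ((p : ℕ) + 1) (fun s => f s q) I x := by
      rw [Matrix.mul_apply]
      have : ∀ j : Fin n, compM hn c x p j *
          (Matrix.of fun p q : Fin n => iteratedDerivWithin (p : ℕ) (fun s => f s q) I x) j q =
          if j = (⟨(p : ℕ) + 1, hp⟩ : Fin n) then
            iteratedDerivWithin ((j : ℕ)) (fun s => f s q) I x else 0 := by
        intro j
        simp only [compM, Matrix.of_apply, if_pos hp, Fin.ext_iff, Fin.val_mk]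
        split_ifs <;> simp
      rw [Finset.sum_congr rfl fun j _ => this j, Finset.sum_ite_eq' Finset.univ]
      simp
    rw [hval]
    exact hasDeriv_iter hIo (hf q) (by omega) hx
  · have hval : (compM hn c x *
        (Matrix.of fun p q : Fin n => iteratedDerivWithin (p : ℕ) (fun s => f s q) I x)) p q =
        iteratedDerivWithin n (fun s => f s q) I x := by
      rw [Matrix.mul_apply, rowRel (hWf x hx) q]
      refine Fintype.sum_equiv Fin.revPerm _ _ fun j => ?_
      simp only [compM, Matrix.of_apply, if_neg hp, Fin.revPerm_apply]
      rw [hc x hx (Fin.rev j), mul_comm]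
      congr 2
      simp [wIdx, Fin.val_rev]
      omega
    rw [hval]
    have hpn : (p : ℕ) + 1 = n := by omega
    have := hasDeriv_iter hIo (hf q) (show (p : ℕ) < n by omega) hx
    rwa [hpn] at this

/-- for `n`-times continuously differentiable `f, g` with nonvanishing
Wronskians and `Φ_f^{[j]} = Φ_g^{[j]}` on `I` for all `j`, each component of `f` is a
constant-coefficient linear combination of the components of `g`, with nonsingular
coefficient matrix `A` satisfying `f = A·g` on `I`. -/
theorem stmt_16 (n : ℕ) (hn : 0 < n) (I : Set ℝ) (hIo : IsOpen I) (hIne : I.Nonempty)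
    (hIc : I.OrdConnected) (f g : ℝ → Fin n → ℝ)
    (hf : ∀ p : Fin n, ContDiffOn ℝ ((n : ℕ) : ℕ∞) (fun t => f t p) I)
    (hg : ∀ p : Fin n, ContDiffOn ℝ ((n : ℕ) : ℕ∞) (fun t => g t p) I)
    (hWf : ∀ x ∈ I, genW I f (wIdx n) x ≠ 0)
    (hWg : ∀ x ∈ I, genW I g (wIdx n) x ≠ 0)
    (hPhi : ∀ j < n, ∀ x ∈ I, Phi I f j x = Phi I g j x) :
    ∃ A : Matrix (Fin n) (Fin n) ℝ, A.det ≠ 0 ∧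
      ∀ x ∈ I, ∀ p : Fin n, f x p = ∑ q : Fin n, A p q * g x q := by
  obtain ⟨x0, hx0⟩ := hIne
  have hu : UniqueDiffOn ℝ I := hIo.uniqueDiffOn
  have hconv : Convex ℝ I := hIc.convex
  set F : ℝ → Matrix (Fin n) (Fin n) ℝ :=
    fun t => Matrix.of fun p q : Fin n => iteratedDerivWithin (p : ℕ) (fun s => f s q) I t with hF
  set G : ℝ → Matrix (Fin n) (Fin n) ℝ :=
    fun t => Matrix.of fun p q : Fin n => iteratedDerivWithin (p : ℕ) (fun s => g s q) I t with hG
  have hcc : ∀ x ∈ I, ∀ r : Fin n, cvec I f x r = cvec I g x r := by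
    intro x hx r
    have hj : n - 1 - (r : ℕ) < n := by have := r.isLt; omega
    have h := hPhi (n - 1 - (r : ℕ)) hj x hx
    rw [Phi, Phi, mul_div_assoc, mul_div_assoc] at h
    have hs : ((-1 : ℝ) ^ (n - (n - 1 - (r : ℕ)) - 1)) ≠ 0 := by
      apply pow_ne_zero; norm_num
    have h2 := mul_left_cancel₀ hs h
    rw [cvec, cvec, h2]
  have hFd : ∀ x ∈ I, HasDerivWithinAt F (compM hn (cvec I f) x * F x) I x :=
    fun x hx => matDeriv hn hIo hf hWf _ (fun _ _ _ => rfl) hx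
  have hGd : ∀ x ∈ I, HasDerivWithinAt G (compM hn (cvec I f) x * G x) I x :=
    fun x hx => matDeriv hn hIo hg hWg (cvec I f) (fun x hx r => hcc x hx r) hx
  have hGu : ∀ x ∈ I, IsUnit (G x) :=
    fun x hx => (Matrix.isUnit_iff_isUnit_det _).2 (Ne.isUnit (detM_ne (hWg x hx)))
  set N : ℝ → Matrix (Fin n) (Fin n) ℝ := fun t => Ring.inverse (G t) * F t with hN
  have hNd : ∀ x ∈ I, HasDerivWithinAt N (0 : Matrix (Fin n) (Fin n) ℝ) I x := by
    intro x hx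
    obtain ⟨u, hu'⟩ := hGu x hx
    have hui : ((u⁻¹ : (Matrix (Fin n) (Fin n) ℝ)ˣ) : Matrix (Fin n) (Fin n) ℝ) = (G x)⁻¹ := by
      rw [Matrix.coe_units_inv, hu']
    have h0 : HasFDerivAt Ring.inverse
        (-ContinuousLinearMap.mulLeftRight ℝ (Matrix (Fin n) (Fin n) ℝ) (G x)⁻¹ (G x)⁻¹)
        (G x) := by
      rw [← hu', ← Matrix.coe_units_inv]
      exact hasFDerivAt_ringInverse u
    have hinv : HasDerivWithinAt (fun t => Ring.inverse (G t))
        (-((G x)⁻¹ * (compM hn (cvec I f) x * G x) * (G x)⁻¹)) I x := by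
      have := h0.comp_hasDerivWithinAt x (hGd x hx)
      simp only [ContinuousLinearMap.neg_apply, ContinuousLinearMap.mulLeftRight_apply] at this
      exact this
    have e1 : Ring.inverse (G x) = (G x)⁻¹ := (Matrix.nonsing_inv_eq_ringInverse _).symm
    have e2 : G x * (G x)⁻¹ = 1 :=
      Matrix.mul_nonsing_inv _ ((Matrix.isUnit_iff_isUnit_det _).1 (hGu x hx))
    have h3 : (G x)⁻¹ * (compM hn (cvec I f) x * G x) * (G x)⁻¹ =
        (G x)⁻¹ * compM hn (cvec I f) x := by
      rw [mul_assoc, mul_assoc, e2, mul_one]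
    have hNx := hinv.mul (hFd x hx)
    rw [e1] at hNx
    convert hNx using 1
    all_goals try rfl
    rw [h3, neg_mul, mul_assoc, neg_add_cancel]
  have hNdiff : DifferentiableOn ℝ N I := fun x hx => (hNd x hx).differentiableWithinAt
  have hf0 : ∀ x ∈ I, fderivWithin ℝ N I x = 0 := by
    intro x hx
    have hz : ContinuousLinearMap.smulRight (1 : ℝ →L[ℝ] ℝ)
        (0 : Matrix (Fin n) (Fin n) ℝ) = 0 := by ext; simp
    have h : HasFDerivWithinAt N (0 : ℝ →L[ℝ] Matrix (Fin n) (Fin n) ℝ) I x := by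
      have := (hNd x hx).hasFDerivWithinAt
      rwa [ContinuousLinearMap.toSpanSingleton_zero] at this
    exact h.fderivWithin (hu x hx)
  have hconst : ∀ x ∈ I, N x = N x0 :=
    fun x hx => hconv.is_const_of_fderivWithin_eq_zero hNdiff hf0 hx hx0
  set B : Matrix (Fin n) (Fin n) ℝ := N x0 with hB
  have hFG : ∀ x ∈ I, F x = G x * B := by
    intro x hx
    have h := hconst x hx
    calc F x = (G x * Ring.inverse (G x)) * F x := by
          rw [Ring.mul_inverse_cancel _ (hGu x hx), one_mul]
      _ = G x * (Ring.inverse (G x) * F x) := by rw [mul_assoc]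
      _ = G x * B := congrArg (fun M => G x * M) h
  have hdF : (F x0).det ≠ 0 := detM_ne (hWf x0 hx0)
  have hdG : (G x0).det ≠ 0 := detM_ne (hWg x0 hx0)
  have hdet : (F x0).det = (G x0).det * B.det := by rw [hFG x0 hx0, Matrix.det_mul]
  have hBdet : B.det ≠ 0 := by
    intro h
    rw [h, mul_zero] at hdet
    exact hdF hdet
  refine ⟨Bᵀ, by rwa [Matrix.det_transpose], ?_⟩
  intro x hx p
  have h := congrFun (congrFun (hFG x hx) ⟨0, hn⟩) p
  have h0 : F x ⟨0, hn⟩ p = f x p := by simp [hF, iteratedDerivWithin_zero]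
  have h1 : (G x * B) ⟨0, hn⟩ p = ∑ q, Bᵀ p q * g x q := by
    rw [Matrix.mul_apply]
    refine Finset.sum_congr rfl fun r _ => ?_
    simp [hG, iteratedDerivWithin_zero, Matrix.transpose_apply, mul_comm]
  rw [← h0, h, h1]
end

section
/- Let n ∈ ℕ, let a = (a_1, ..., a_n) : I → ℝ^n be a twice differentiable function, and define X_a := (a | e_1 | ... | e_{n−1}). Then for every j ∈ {0, ..., n−1}, the inner product ⟨ B_3(X_a, X_a', X_a'') e_1, e_{n−j} ⟩ equals a_1² a_{n−j} + a_1 a_{n−j+1} + a_2 a_{n−j} + a_{n−j+2} + a_1 a_{n−j}' + 2 a_1' a_{n−j} + 2 a_{n−j+1}' + a_{n−j}'' on I, where a_{n+1} := a_{n+2} := 0; that is, this is the (n−j)-th entry of (X_a³ + 2 X_a X_a' + X_a' X_a + X_a'') e_1. -/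
open Matrix

section Aux

lemma bell_cast {n : ℕ} {k m : ℕ} (h : k = m) (f : Fin k → Matrix (Fin n) (Fin n) ℝ) :
    Bell k f = Bell m (fun i => f (Fin.cast h.symm i)) := by
  subst h; rfl

lemma bell1 {n : ℕ} (X : Fin 1 → Matrix (Fin n) (Fin n) ℝ) : Bell 1 X = X 0 := by
  rw [Bell.eq_2 0 X, Fin.sum_univ_one, bell_cast (show ((0:Fin 1):ℕ) = 0 by rfl), Bell.eq_1]
  norm_num

lemma bell2 {n : ℕ} (X : Fin 2 → Matrix (Fin n) (Fin n) ℝ) :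
    Bell 2 X = X 1 + X 0 * X 0 := by
  rw [Bell.eq_2 1 X, Fin.sum_univ_two,
    bell_cast (show ((0:Fin 2):ℕ) = 0 by rfl),
    bell_cast (show ((1:Fin 2):ℕ) = 1 by rfl), Bell.eq_1, bell1]
  norm_num [Fin.castLE]

lemma bell3 {n : ℕ} (X : Fin 3 → Matrix (Fin n) (Fin n) ℝ) :
    Bell 3 X = X 0 ^ 3 + 2 • (X 0 * X 1) + X 1 * X 0 + X 2 := by
  rw [Bell.eq_2 2 X, Fin.sum_univ_three,
    bell_cast (show ((0:Fin 3):ℕ) = 0 by rfl),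
    bell_cast (show ((1:Fin 3):ℕ) = 1 by rfl),
    bell_cast (show ((2:Fin 3):ℕ) = 2 by rfl), Bell.eq_1, bell1, bell2]
  norm_num [Fin.castLE]
  rw [show (⟨2, by omega⟩ : Fin 3) = 2 by rfl]
  noncomm_ring
  simp [two_smul]
  abel

lemma matD_zero {n : ℕ} (I : Set ℝ) (X : ℝ → Matrix (Fin n) (Fin n) ℝ) (x : ℝ) :
    matD I X 0 x = X x := by
  ext p q
  show iteratedDerivWithin 0 (fun t => X t p q) I x = X x p q
  rw [iteratedDerivWithin_zero]

def extV {n : ℕ} (v : Fin n → ℝ) (i : ℕ) : ℝ := if h : i < n then v ⟨i, h⟩ else 0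

lemma extV_add {n : ℕ} (u v : Fin n → ℝ) (k : ℕ) :
    extV (u + v) k = extV u k + extV v k := by
  unfold extV; split <;> simp

lemma sum_ite_val {n : ℕ} (f : Fin n → ℝ) (k : ℕ) :
    (∑ q : Fin n, if (q : ℕ) = k then f q else 0) = extV f k := by
  by_cases h : k < n
  · rw [Finset.sum_eq_single ⟨k, h⟩]
    · simp [extV, h]
    · intro b _ hb
      rw [if_neg]
      intro hbk
      exact hb (Fin.ext hbk)
    · simp
  · rw [Finset.sum_eq_zero, extV, dif_neg h]
    intro q _
    rw [if_neg]
    omega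

lemma dot_stdB {n : ℕ} (w : Fin n → ℝ) (m : ℕ) (hm : 0 < m) :
    w ⬝ᵥ stdB n m = extV w (m - 1) := by
  unfold dotProduct stdB
  rw [← sum_ite_val w (m-1)]
  refine Finset.sum_congr rfl fun q _ => ?_
  by_cases h : (q : ℕ) = m - 1 <;> simp [h, mul_ite] <;> omega

lemma extV_e1_zero {n : ℕ} (hn : 0 < n) : extV (stdB n 1) 0 = 1 := by
  simp [extV, stdB, hn]

lemma extV_e1_succ {n : ℕ} (k : ℕ) : extV (stdB n 1) (k + 1) = 0 := by
  unfold extV stdB; split <;> simp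

lemma colMat_mulVec_extV {n : ℕ} (a : ℝ → Fin n → ℝ) (x : ℝ) (v : Fin n → ℝ) (i : ℕ) :
    extV ((colMat a x).mulVec v) i = extV (a x) i * extV v 0 + extV v (i + 1) := by
  by_cases h : i < n
  · have hn : 0 < n := by omega
    rw [extV, dif_pos h]
    show (∑ q : Fin n, colMat a x ⟨i, h⟩ q * v q) = _
    have : ∀ q : Fin n, colMat a x ⟨i, h⟩ q * v q =
        (if (q : ℕ) = 0 then a x ⟨i, h⟩ * v q else 0) +
          (if (q : ℕ) = i + 1 then v q else 0) := by
      intro q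
      by_cases h0 : (q : ℕ) = 0
      · simp [colMat, h0]
      · by_cases h1 : (q : ℕ) = i + 1 <;> simp [colMat, h0, h1] <;> omega
    rw [Finset.sum_congr rfl fun q _ => this q, Finset.sum_add_distrib,
      sum_ite_val, sum_ite_val]
    congr 1
    simp [extV, hn, h]
  · have h1 : ¬ (i + 1 < n) := by omega
    simp [extV, h, h1]

lemma iter_const {I : Set ℝ} (hI : UniqueDiffOn ℝ I) {x : ℝ} (hx : x ∈ I) (c : ℝ)
    (k : ℕ) (hk : k = 1 ∨ k = 2) :
    iteratedDerivWithin k (fun _ => c) I x = 0 := by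
  rcases hk with hk | hk <;> subst hk
  · rw [iteratedDerivWithin_one]
    exact congrFun (derivWithin_fun_const _ _) _
  · rw [show (2:ℕ) = 1 + 1 from rfl, iteratedDerivWithin_succ]
    rw [derivWithin_congr (f := fun _ => (0:ℝ))
      (fun y hy => by
        rw [iteratedDerivWithin_one]
        exact congrFun (derivWithin_fun_const _ _) _)
      (by rw [iteratedDerivWithin_one]
          exact congrFun (derivWithin_fun_const _ _) _)]
    exact congrFun (derivWithin_fun_const _ _) _

lemma matD_colMat_mulVec_extV {n : ℕ} {I : Set ℝ} (hI : UniqueDiffOn ℝ I)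
    (a : ℝ → Fin n → ℝ) {x : ℝ} (hx : x ∈ I) (k : ℕ) (hk : k = 1 ∨ k = 2)
    (v : Fin n → ℝ) (i : ℕ) :
    extV ((matD I (colMat a) k x).mulVec v) i =
      extV (fun p => iteratedDerivWithin k (fun t => a t p) I x) i * extV v 0 := by
  have hent : ∀ p q : Fin n, matD I (colMat a) k x p q =
      if (q : ℕ) = 0 then iteratedDerivWithin k (fun t => a t p) I x else 0 := by
    intro p q
    by_cases h0 : (q : ℕ) = 0
    · rw [if_pos h0]
      show iteratedDerivWithin k (fun t => colMat a t p q) I x = _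
      congr 1
      funext t
      simp [colMat, h0]
    · rw [if_neg h0]
      show iteratedDerivWithin k (fun t => colMat a t p q) I x = 0
      have : (fun t => colMat a t p q) =
          fun _ => (if (p : ℕ) + 1 = (q : ℕ) then (1:ℝ) else 0) := by
        funext t; simp [colMat, h0]
      rw [this]
      exact iter_const hI hx _ k hk
  by_cases h : i < n
  · have hn : 0 < n := by omega
    rw [extV, dif_pos h]
    show (∑ q : Fin n, matD I (colMat a) k x ⟨i, h⟩ q * v q) = _
    have : ∀ q : Fin n, matD I (colMat a) k x ⟨i, h⟩ q * v q =
        (if (q : ℕ) = 0 then iteratedDerivWithin k (fun t => a t ⟨i,h⟩) I x * v q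
          else 0) := by
      intro q
      rw [hent]
      by_cases h0 : (q : ℕ) = 0 <;> simp [h0]
    rw [Finset.sum_congr rfl fun q _ => this q, sum_ite_val]
    simp [extV, hn, h]
  · simp [extV, h]

end Aux

/-- for twice differentiable `a`,
`⟨B_3(X_a, X_a', X_a'') e_1, e_{n-j}⟩ = a_1² a_{n-j} + a_1 a_{n-j+1} + a_2 a_{n-j}
+ a_{n-j+2} + a_1 a_{n-j}' + 2 a_1' a_{n-j} + 2 a_{n-j+1}' + a_{n-j}''` on `I` for
`0 ≤ j ≤ n-1` (with `a_{n+1} := a_{n+2} := 0`); i.e. this is the `(n-j)`-th entry of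
`(X_a³ + 2 X_a X_a' + X_a' X_a + X_a'') e_1`. -/
theorem stmt_18 (n : ℕ) (hn : 0 < n) (I : Set ℝ) (hIo : IsOpen I) (hIne : I.Nonempty)
    (hIc : I.OrdConnected) (a : ℝ → Fin n → ℝ)
    (ha : ∀ i : Fin n, DifferentiableOn ℝ (fun t => a t i) I)
    (ha' : ∀ i : Fin n, DifferentiableOn ℝ (derivWithin (fun t => a t i) I) I) :
    ∀ j < n, ∀ x ∈ I,
      ((BellD I (colMat a) 3 x).mulVec (stdB n 1) ⬝ᵥ stdB n (n - j) =
        aExt a 1 x ^ 2 * aExt a (n - j) x + aExt a 1 x * aExt a (n - j + 1) x +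
          aExt a 2 x * aExt a (n - j) x + aExt a (n - j + 2) x +
          aExt a 1 x * derivWithin (aExt a (n - j)) I x +
          2 * derivWithin (aExt a 1) I x * aExt a (n - j) x +
          2 * derivWithin (aExt a (n - j + 1)) I x +
          iteratedDerivWithin 2 (aExt a (n - j)) I x) ∧
      (colMat a x ^ 3 + 2 • (colMat a x * matD I (colMat a) 1 x) +
          matD I (colMat a) 1 x * colMat a x + matD I (colMat a) 2 x).mulVec
            (stdB n 1) ⬝ᵥ stdB n (n - j) =
        aExt a 1 x ^ 2 * aExt a (n - j) x + aExt a 1 x * aExt a (n - j + 1) x +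
          aExt a 2 x * aExt a (n - j) x + aExt a (n - j + 2) x +
          aExt a 1 x * derivWithin (aExt a (n - j)) I x +
          2 * derivWithin (aExt a 1) I x * aExt a (n - j) x +
          2 * derivWithin (aExt a (n - j + 1)) I x +
          iteratedDerivWithin 2 (aExt a (n - j)) I x := by
  have hu : UniqueDiffOn ℝ I := hIo.uniqueDiffOn
  intro j hj x hx
  have hn0 : 0 < n := hn
  have e1 : n - j = (n - j - 1) + 1 := by omega
  have hA : ∀ k : ℕ, aExt a (k+1) x = extV (a x) k := by
    intro k; simp [aExt, extV]
  have hA1 : aExt a 1 x = extV (a x) 0 := hA 0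
  have hA2 : aExt a 2 x = extV (a x) 1 := hA 1
  have hAf : ∀ k : ℕ, aExt a (k+1) = fun t => extV (a t) k := by
    intro k; funext t; simp [aExt, extV]
  have hdW : ∀ k : ℕ, derivWithin (fun t => extV (a t) k) I x
      = extV (fun p => derivWithin (fun t => a t p) I x) k := by
    intro k; by_cases h : k < n
    · simp only [extV, dif_pos h]
    · simp only [extV, dif_neg h]
      exact congrFun (derivWithin_fun_const _ _) _
  have hd2W : ∀ k : ℕ, iteratedDerivWithin 2 (fun t => extV (a t) k) I x
      = extV (fun p => iteratedDerivWithin 2 (fun t => a t p) I x) k := by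
    intro k; by_cases h : k < n
    · simp only [extV, dif_pos h]
    · simp only [extV, dif_neg h]
      exact iter_const hu hx 0 2 (Or.inr rfl)
  have hone : (fun p : Fin n => iteratedDerivWithin 1 (fun t => a t p) I x)
      = fun p => derivWithin (fun t => a t p) I x := by
    funext p; exact congrFun iteratedDerivWithin_one x
  have hm1 := matD_colMat_mulVec_extV hu a hx 1 (Or.inl rfl)
  have hm2 := matD_colMat_mulVec_extV hu a hx 2 (Or.inr rfl)
  set i : ℕ := n - j - 1 with hidef
  have key : (colMat a x ^ 3 + 2 • (colMat a x * matD I (colMat a) 1 x) +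
      matD I (colMat a) 1 x * colMat a x + matD I (colMat a) 2 x).mulVec
        (stdB n 1) ⬝ᵥ stdB n (n - j) =
      aExt a 1 x ^ 2 * aExt a (n - j) x + aExt a 1 x * aExt a (n - j + 1) x +
        aExt a 2 x * aExt a (n - j) x + aExt a (n - j + 2) x +
        aExt a 1 x * derivWithin (aExt a (n - j)) I x +
        2 * derivWithin (aExt a 1) I x * aExt a (n - j) x +
        2 * derivWithin (aExt a (n - j + 1)) I x +
        iteratedDerivWithin 2 (aExt a (n - j)) I x := by
    rw [show colMat a x ^ 3 = colMat a x * colMat a x * colMat a x by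
        rw [pow_succ, pow_two], two_smul ℕ]
    rw [e1]
    rw [show (i + 1) + 1 = (i + 1) + 1 from rfl,
      show (i + 1) + 2 = (i + 2) + 1 by omega]
    rw [dot_stdB _ _ (Nat.succ_pos i), Nat.succ_sub_one]
    rw [Matrix.add_mulVec, Matrix.add_mulVec, Matrix.add_mulVec, Matrix.add_mulVec]
    simp only [← Matrix.mulVec_mulVec]
    simp only [extV_add, colMat_mulVec_extV, hm1, hm2, extV_e1_zero hn0,
      extV_e1_succ, mul_one, mul_zero, add_zero, zero_add]
    rw [hA1, hA2, hA i, hA (i+1), hA (i+2),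
      show aExt a 1 = aExt a (0 + 1) from rfl, hAf, hAf, hAf, hdW, hdW, hdW, hd2W, hone]
    ring
  refine ⟨?_, key⟩
  have hB : BellD I (colMat a) 3 x =
      colMat a x ^ 3 + 2 • (colMat a x * matD I (colMat a) 1 x) +
        matD I (colMat a) 1 x * colMat a x + matD I (colMat a) 2 x := by
    show Bell 3 (fun k : Fin 3 => matD I (colMat a) (k : ℕ) x) = _
    rw [bell3]
    rw [show ((0 : Fin 3) : ℕ) = 0 from rfl, show ((1 : Fin 3) : ℕ) = 1 from rfl,
      show ((2 : Fin 3) : ℕ) = 2 from rfl, matD_zero]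
  rw [hB]
  exact key
end
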